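/- arXiv:1208.0859 — 3 statements merged into one kernel-verified Lean document; each statement's English description precedes it below -/
import Mathlib

section
/- Under the standing hypotheses, there exist a positive integer M and a compact set K ⊆ ℝ² such that the square [0,1]² is contained in a bounded connected component of ℝ² \ K and K ⊆ ⋃_{(i,v)∈Σ(M)} (f̂^i(O) + v). -/
noncomputable section

/-- The plane ℝ², with the Euclidean norm. -/
abbrev Plane : Type := EuclideanSpace ℝ (Fin 2)

/-- Integer vectors (elements of ℤ²). -/
abbrev IntVec : Type := Fin 2 → ℤ

/-- The inclusion of ℤ² into ℝ². -/
def ivec (w : IntVec) : Plane := WithLp.toLp 2 (fun i => (w i : ℝ))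

/-- The inclusion of ℤ² into ℝ² as an additive homomorphism. -/
def ivecHom : IntVec →+ Plane where
  toFun := ivec
  map_zero' := by ext i; simp [ivec]
  map_add' a b := by ext i; simp [ivec]

/-- The integer lattice ℤ² as an additive subgroup of ℝ². -/
def Lattice2 : AddSubgroup Plane := ivecHom.range

/-- The torus 𝕋² = ℝ²/ℤ². -/
abbrev Torus2 : Type := Plane ⧸ Lattice2

/-- The universal covering map π : ℝ² → 𝕋². -/
def proj : Plane → Torus2 := QuotientAddGroup.mk

/-- The `j`-th iterate (j ∈ ℤ) of a homeomorphism. -/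
def zIter {X : Type*} [TopologicalSpace X] (g : X ≃ₜ X) (j : ℤ) : X → X := ⇑(g.toEquiv ^ j)

/-- The rotation set of a map of the plane (commuting with integer translations). -/
def rotationSet (g : Plane → Plane) : Set Plane :=
  {v | ∃ (x : ℕ → Plane) (n : ℕ → ℕ), (∀ k, 0 < n k) ∧
    Filter.Tendsto n Filter.atTop Filter.atTop ∧
    Filter.Tendsto (fun k => ((n k : ℝ))⁻¹ • (g^[n k] (x k) - x k))
      Filter.atTop (nhds v)}

/-- Topological transitivity: some forward iterate of any nonempty open set
meets any other nonempty open set. -/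
def IsTransitive {X : Type*} [TopologicalSpace X] (g : X → X) : Prop :=
  ∀ U V : Set X, IsOpen U → IsOpen V → U.Nonempty → V.Nonempty →
    ∃ n : ℕ, 1 ≤ n ∧ (g^[n] '' U ∩ V).Nonempty

/-- `g` is a lift of `f` through the covering map `proj`. -/
def IsLift (f : Torus2 ≃ₜ Torus2) (g : Plane ≃ₜ Plane) : Prop :=
  proj ∘ ⇑g = ⇑f ∘ proj

/-- `g` commutes with the integer translations. -/
def Equivariant (g : Plane → Plane) : Prop :=
  ∀ (x : Plane) (w : IntVec), g (x + ivec w) = g x + ivec w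

/-- An open set of the torus, all of whose loops are null-homotopic in the torus. -/
def InessentialOpen (U : Set Torus2) : Prop :=
  ∀ (x : Torus2) (γ : Path x x), Set.range ⇑γ ⊆ U → γ.Homotopic (Path.refl x)

/-- A set is inessential if it has an inessential open neighborhood. -/
def Inessential (A : Set Torus2) : Prop :=
  ∃ U : Set Torus2, IsOpen U ∧ A ⊆ U ∧ InessentialOpen U

/-- A set is fully essential if its complement is inessential. -/
def FullyEssential (A : Set Torus2) : Prop := Inessential Aᶜ

/-- The sup norm of an integer vector. -/
def supNormZ (w : IntVec) : ℤ := max |w 0| |w 1|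

/-- The box S(v,L) = {w ∈ ℤ² : ‖w−v‖_∞ ≤ L}. -/
def SBox (v : IntVec) (L : ℤ) : Set IntVec := {w | supNormZ (w - v) ≤ L}

/-- Σ(M) = {(i,v) ∈ ℤ×ℤ² : |i| ≤ M, ‖v‖_∞ ≤ M}. -/
def SigmaBox (M : ℤ) : Set (ℤ × IntVec) := {p | |p.1| ≤ M ∧ supNormZ p.2 ≤ M}

/-- The translate A + w of a set A ⊆ ℝ² by an integer vector w. -/
def trSet (A : Set Plane) (w : IntVec) : Set Plane := (· + ivec w) '' A

/-- I(j,v) = {w ∈ ℤ² : f̂ʲ(O+v) ∩ (O+w) ≠ ∅}. -/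
def ISet (g : Plane ≃ₜ Plane) (O : Set Plane) (j : ℤ) (v : IntVec) : Set IntVec :=
  {w | (zIter g j '' trSet O v ∩ trSet O w).Nonempty}

/-- The unit square [0,1]² ⊆ ℝ². -/
def unitSquare : Set Plane := {x | ∀ i, x i ∈ Set.Icc (0:ℝ) 1}

/-- A T_v-translation arc: a curve γ with γ(1) = γ(0) + v whose image meets its
translate by v exactly in γ(1). -/
def IsTranslationArc (v : Plane) (γ : C(unitInterval, Plane)) : Prop :=
  γ 1 = γ 0 + v ∧ Set.range ⇑γ ∩ (· + v) '' Set.range ⇑γ = {γ 1}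

/-- The open ball of radius ε around x in the torus (for the quotient metric). -/
def torusBall (x : Torus2) (ε : ℝ) : Set Torus2 :=
  {y | ∃ a b : Plane, proj a = x ∧ proj b = y ∧ dist a b < ε}


open Metric Set Filter Topology

namespace KT

lemma ivec_injective : Function.Injective ivec := by
  intro a b h
  funext i
  have : (a i : ℝ) = b i := congrArg (fun x : Plane => x i) h
  exact_mod_cast this

lemma abs_coord_le_norm (x : Plane) (i : Fin 2) : |x i| ≤ ‖x‖ := by
  rw [EuclideanSpace.norm_eq]
  have h0 : |x i| = Real.sqrt (‖x i‖ ^ 2) := by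
    rw [Real.sqrt_sq_eq_abs, Real.norm_eq_abs, abs_abs]
  rw [h0]
  apply Real.sqrt_le_sqrt
  exact Finset.single_le_sum (f := fun j => ‖x j‖ ^ 2) (fun j _ => sq_nonneg _) (Finset.mem_univ i)

lemma one_le_norm_lattice_ne_zero {x : Plane} (hx : x ∈ (Lattice2 : Set Plane))
    (hx0 : x ≠ 0) : 1 ≤ ‖x‖ := by
  obtain ⟨w, rfl⟩ := hx
  have hw : w ≠ 0 := by rintro rfl; exact hx0 (map_zero ivecHom)
  have : ∃ i, w i ≠ 0 := by
    by_contra h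
    push_neg at h
    exact hw (funext h)
  obtain ⟨i, hi⟩ := this
  have h1 : (1 : ℝ) ≤ |(w i : ℝ)| := by
    have := Int.one_le_abs (by exact_mod_cast hi : w i ≠ 0)
    calc (1:ℝ) = ((1:ℤ):ℝ) := by norm_num
    _ ≤ ((|w i| : ℤ) : ℝ) := by exact_mod_cast this
    _ = |(w i : ℝ)| := by push_cast; ring
  calc (1:ℝ) ≤ |(w i : ℝ)| := h1
  _ = |(ivecHom w) i| := rfl
  _ ≤ ‖ivecHom w‖ := abs_coord_le_norm _ i

lemma lattice_points_dist {x y : Plane} (hx : x ∈ (Lattice2 : Set Plane))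
    (hy : y ∈ (Lattice2 : Set Plane)) (hxy : x ≠ y) : 1 ≤ dist x y := by
  have : x - y ∈ (Lattice2 : Set Plane) := Lattice2.sub_mem hx hy
  have h0 : x - y ≠ 0 := sub_ne_zero_of_ne hxy
  calc (1:ℝ) ≤ ‖x - y‖ := one_le_norm_lattice_ne_zero this h0
  _ = dist x y := (dist_eq_norm x y).symm

lemma proj_continuous : Continuous proj := continuous_quotient_mk'

lemma proj_isOpenMap : IsOpenMap proj := QuotientAddGroup.isOpenMap_coe

lemma proj_surjective : Function.Surjective proj := QuotientAddGroup.mk_surjective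

lemma proj_eq_iff {x y : Plane} : proj x = proj y ↔ x - y ∈ Lattice2 :=
  QuotientAddGroup.eq_iff_sub_mem

lemma proj_add_lattice {x l : Plane} (hl : l ∈ Lattice2) : proj (x + l) = proj x := by
  rw [proj_eq_iff]; simpa using hl

lemma proj_add_ivec (x : Plane) (w : IntVec) : proj (x + ivec w) = proj x :=
  proj_add_lattice ⟨w, rfl⟩

lemma proj_eq_zero_iff {x : Plane} : proj x = proj 0 ↔ x ∈ Lattice2 := by
  rw [proj_eq_iff]; simp

-- ## Discreteness: continuous lattice-valued maps on preconnected sets are constant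

lemma lattice_discrete_subsingleton {T : Set Plane} (hT : T ⊆ (Lattice2 : Set Plane))
    (hpc : IsPreconnected T) : T.Subsingleton := by
  intro a ha b hb
  by_contra hab
  have hU : IsOpen (ball a 1) := isOpen_ball
  have hV : IsOpen {z : Plane | 1/2 < dist z a} := by
    have : {z : Plane | 1/2 < dist z a} = (dist · a) ⁻¹' (Ioi (1/2)) := rfl
    rw [this]
    exact isOpen_Ioi.preimage (continuous_id.dist continuous_const)
  have hcover : T ⊆ ball a 1 ∪ {z | 1/2 < dist z a} := by
    intro z hz
    by_cases h : z = a
    · left; simp [h, mem_ball]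
    · right
      have := lattice_points_dist (hT hz) (hT ha) h
      simp only [mem_setOf_eq]
      linarith
  have hTa : (T ∩ ball a 1).Nonempty := ⟨a, ha, by simp [mem_ball]⟩
  have hTb : (T ∩ {z | 1/2 < dist z a}).Nonempty := by
    refine ⟨b, hb, ?_⟩
    have := lattice_points_dist (hT hb) (hT ha) (fun h => hab h.symm)
    simp only [mem_setOf_eq]
    linarith
  obtain ⟨z, hzT, hz1, hz2⟩ := hpc _ _ hU hV hcover hTa hTb
  have h1 : dist z a < 1 := mem_ball.mp hz1
  have h2 : (1:ℝ)/2 < dist z a := hz2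
  by_cases h : z = a
  · rw [h] at h2; simp at h2; linarith
  · have := lattice_points_dist (hT hzT) (hT ha) h
    linarith

lemma lattice_const_on {X : Type*} [TopologicalSpace X] {s : Set X}
    (hs : IsPreconnected s) {u : X → Plane} (hu : ContinuousOn u s)
    (hl : ∀ x ∈ s, u x ∈ (Lattice2 : Set Plane)) {x y : X} (hx : x ∈ s) (hy : y ∈ s) :
    u x = u y := by
  have himg : IsPreconnected (u '' s) := hs.image u hu
  have hsub : u '' s ⊆ (Lattice2 : Set Plane) := by
    rintro _ ⟨z, hz, rfl⟩; exact hl z hz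
  exact lattice_discrete_subsingleton hsub himg ⟨x, hx, rfl⟩ ⟨y, hy, rfl⟩

-- ## Local sections of proj

/-- base ball of radius 1/3 around `a` -/
def B (a : Plane) : Set Plane := ball a (1/3)

def U (a : Plane) : Set Torus2 := proj '' B a

def tau (a : Plane) : Torus2 → Plane := Function.invFunOn proj (B a)

lemma injOn_proj_B (a : Plane) : Set.InjOn proj (B a) := by
  intro x hx y hy hxy
  by_contra h
  have h1 := lattice_points_dist (proj_eq_iff.mp hxy) (Lattice2.zero_mem)
    (sub_ne_zero_of_ne h)
  have : dist (x - y) 0 = dist x y := by simp [dist_eq_norm]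
  rw [this] at h1
  have hx' : dist x a < 1/3 := mem_ball.mp hx
  have hy' : dist y a < 1/3 := mem_ball.mp hy
  have := dist_triangle_right x y a
  linarith

lemma U_open (a : Plane) : IsOpen (U a) := proj_isOpenMap _ isOpen_ball

lemma mem_U_self (a : Plane) : proj a ∈ U a :=
  ⟨a, mem_ball_self (by norm_num), rfl⟩

lemma tau_proj {a z : Plane} (hz : z ∈ B a) : tau a (proj z) = z := by
  have h1 : tau a (proj z) ∈ B a ∧ proj (tau a (proj z)) = proj z := by
    have := Function.invFunOn_pos (f := proj) (s := B a) ⟨z, hz, rfl⟩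
    exact ⟨this.1, this.2⟩
  exact injOn_proj_B a h1.1 hz h1.2

lemma tau_mem_B {a : Plane} {u : Torus2} (hu : u ∈ U a) : tau a u ∈ B a := by
  obtain ⟨z, hz, rfl⟩ := hu
  rw [tau_proj hz]; exact hz

lemma proj_tau {a : Plane} {u : Torus2} (hu : u ∈ U a) : proj (tau a u) = u := by
  obtain ⟨z, hz, rfl⟩ := hu
  rw [tau_proj hz]

lemma tau_continuousOn (a : Plane) : ContinuousOn (tau a) (U a) := by
  rw [_root_.continuousOn_iff']
  intro S hS
  refine ⟨proj '' (S ∩ B a), proj_isOpenMap _ (hS.inter isOpen_ball), ?_⟩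
  ext u
  constructor
  · rintro ⟨huS, huU⟩
    exact ⟨⟨tau a u, ⟨huS, tau_mem_B huU⟩, proj_tau huU⟩, huU⟩
  · rintro ⟨⟨z, ⟨hzS, hzB⟩, rfl⟩, huU⟩
    refine ⟨?_, huU⟩
    show tau a (proj z) ∈ S
    rw [tau_proj hzB]; exact hzS

-- every lift point of a point of `U a` is in some lattice translate of `B a`
lemma lift_point_structure {a z : Plane} (hz : proj z ∈ U a) :
    ∃ l ∈ (Lattice2 : Set Plane), z = tau a (proj z) + l := by
  refine ⟨z - tau a (proj z), ?_, by abel⟩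
  show z - tau a (proj z) ∈ Lattice2
  rw [← proj_eq_iff, proj_tau hz]

-- ## Uniqueness of path lifts
lemma lift_unique {a b : ℝ} (hab : a ≤ b) {c : ℝ → Torus2} {c₁ c₂ : ℝ → Plane}
    (h₁ : ContinuousOn c₁ (Icc a b)) (h₂ : ContinuousOn c₂ (Icc a b))
    (hp₁ : ∀ t ∈ Icc a b, proj (c₁ t) = c t) (hp₂ : ∀ t ∈ Icc a b, proj (c₂ t) = c t)
    (hstart : c₁ a = c₂ a) : ∀ t ∈ Icc a b, c₁ t = c₂ t := by
  intro t ht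
  have key : (fun t => c₁ t - c₂ t) a = (fun t => c₁ t - c₂ t) t := by
    apply lattice_const_on isPreconnected_Icc (h₁.sub h₂) ?_ (left_mem_Icc.mpr hab) ht
    intro s hs
    show c₁ s - c₂ s ∈ Lattice2
    rw [← proj_eq_iff, hp₁ s hs, hp₂ s hs]
  have key2 : c₁ t - c₂ t = c₁ a - c₂ a := key.symm
  rw [hstart, sub_self] at key2
  exact sub_eq_zero.mp key2

-- ## Gluing continuous functions on intervals
lemma glue_Icc {a m c : ℝ} (ham : a ≤ m) (hmc : m ≤ c) {F G : ℝ → Plane}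
    (hF : ContinuousOn F (Icc a m)) (hG : ContinuousOn G (Icc m c)) (hFG : F m = G m) :
    ∃ H : ℝ → Plane, ContinuousOn H (Icc a c) ∧ (∀ t ∈ Icc a m, H t = F t) ∧
      (∀ t ∈ Icc m c, H t = G t) := by
  classical
  refine ⟨fun t => if t ≤ m then F t else G t, ?_, ?_, ?_⟩
  · apply ContinuousOn.if
    · intro x hx
      have : x ∈ frontier (Iic m) := by simpa [Set.Iic] using hx.2
      rw [frontier_Iic] at this
      simp only [mem_singleton_iff] at this
      subst this
      exact hFG
    · apply hF.mono
      intro x hx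
      have h1 : x ∈ Icc a c := hx.1
      have h2 : x ∈ closure {a_1 | a_1 ≤ m} := hx.2
      have hcl : IsClosed {a_1 : ℝ | a_1 ≤ m} := isClosed_Iic
      rw [hcl.closure_eq] at h2
      exact ⟨h1.1, h2⟩
    · apply hG.mono
      intro x hx
      have h1 : x ∈ Icc a c := hx.1
      have h2 : x ∈ closure {a_1 : ℝ | ¬a_1 ≤ m} := hx.2
      have he : {a_1 : ℝ | ¬a_1 ≤ m} = Ioi m := by ext z; simp [not_le]
      rw [he, closure_Ioi] at h2
      exact ⟨h2, h1.2⟩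
  · intro t ht
    simp [ht.2]
  · intro t ht
    by_cases h : t ≤ m
    · have : t = m := le_antisymm h ht.1
      subst this
      simp [hFG]
    · simp [h]
-- ## Existence of path lifts

/-- `cl` is a lift of `c` on `[0,1]` starting at `x0`. -/
def RowLiftOn (c : ℝ → Torus2) (x0 : Plane) (cl : ℝ → Plane) : Prop :=
  ContinuousOn cl (Icc 0 1) ∧ cl 0 = x0 ∧ ∀ t ∈ Icc 0 1, proj (cl t) = c t

/-- a choice of representative -/
def rep (z : Torus2) : Plane := (proj_surjective z).choose

lemma proj_rep (z : Torus2) : proj (rep z) = z := (proj_surjective z).choose_spec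

lemma lift_exists {c : ℝ → Torus2} (hc : Continuous c) {x0 : Plane} (h0 : proj x0 = c 0) :
    ∃ cl, RowLiftOn c x0 cl := by
  have hcover : Icc (0:ℝ) 1 ⊆ ⋃ z : Torus2, c ⁻¹' (U (rep z)) := by
    intro t _
    refine mem_iUnion.mpr ⟨c t, ?_⟩
    show c t ∈ U (rep (c t))
    have := mem_U_self (rep (c t))
    rwa [proj_rep] at this
  obtain ⟨δ, hδpos, hδ⟩ := lebesgue_number_lemma_of_metric isCompact_Icc
    (fun z => (U_open (rep z)).preimage hc) hcover
  obtain ⟨n, hn⟩ := exists_nat_one_div_lt hδpos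
  set N : ℕ := n + 1 with hN
  have hNpos : 0 < (N:ℝ) := by positivity
  have hstep : 1 / (N:ℝ) < δ := by
    have he : ((n:ℝ) + 1) = (N:ℝ) := by rw [hN]; push_cast; ring
    rwa [he] at hn
  have main : ∀ i : ℕ, i ≤ N → ∃ cl : ℝ → Plane, ContinuousOn cl (Icc 0 ((i:ℝ)/N)) ∧
      cl 0 = x0 ∧ ∀ t ∈ Icc (0:ℝ) ((i:ℝ)/N), proj (cl t) = c t := by
    intro i
    induction i with
    | zero =>
      intro _
      refine ⟨fun _ => x0, continuousOn_const, rfl, ?_⟩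
      intro t ht
      simp only [Nat.cast_zero, zero_div] at ht
      have : t = 0 := le_antisymm ht.2 ht.1
      rw [this, h0]
    | succ i ih =>
      intro hi1
      obtain ⟨cl, hclc, hcl0, hclp⟩ := ih (le_of_lt (Nat.lt_of_succ_le hi1))
      set ti : ℝ := (i:ℝ)/N with hti_def
      set ti1 : ℝ := ((i+1:ℕ):ℝ)/N with hti1_def
      have hti0 : 0 ≤ ti := by positivity
      have hti_mem : ti ∈ Icc (0:ℝ) 1 := by
        refine ⟨hti0, ?_⟩
        rw [hti_def, div_le_one hNpos]
        exact_mod_cast le_of_lt (Nat.lt_of_succ_le hi1)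
      have htii : ti ≤ ti1 := by
        rw [hti_def, hti1_def]
        gcongr
        exact Nat.le_succ i
      have hdiff : ti1 - ti = 1/N := by
        rw [hti_def, hti1_def]
        push_cast
        field_simp
        ring
      obtain ⟨z, hball⟩ := hδ ti hti_mem
      have hsub : Icc ti ti1 ⊆ c ⁻¹' (U (rep z)) := by
        intro t ht
        apply hball
        rw [mem_ball, Real.dist_eq, abs_of_nonneg (by linarith [ht.1])]
        linarith [ht.2, hdiff, hstep]
      have hcti : c ti ∈ U (rep z) := hsub ⟨le_refl _, htii⟩
      have hclti : proj (cl ti) = c ti := hclp ti ⟨hti0, le_refl _⟩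
      obtain ⟨l, hlmem, hl⟩ := lift_point_structure (z := cl ti) (by rw [hclti]; exact hcti)
      rw [hclti] at hl
      set next : ℝ → Plane := fun t => tau (rep z) (c t) + l with hnext_def
      have hnextc : ContinuousOn next (Icc ti ti1) := by
        apply ContinuousOn.add ?_ continuousOn_const
        exact (tau_continuousOn (rep z)).comp hc.continuousOn hsub
      have hnext_ti : next ti = cl ti := hl.symm
      have hnext_proj : ∀ t ∈ Icc ti ti1, proj (next t) = c t := by
        intro t ht
        rw [hnext_def]
        simp only
        rw [proj_add_lattice hlmem, proj_tau (hsub ht)]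
      obtain ⟨H, hHc, hHF, hHG⟩ := glue_Icc hti0 htii hclc hnextc hnext_ti.symm
      refine ⟨H, ?_, ?_, ?_⟩
      · exact hHc
      · rw [hHF 0 ⟨le_refl _, hti0⟩, hcl0]
      · intro t ht
        by_cases hcase : t ≤ ti
        · rw [hHF t ⟨ht.1, hcase⟩]
          exact hclp t ⟨ht.1, hcase⟩
        · push_neg at hcase
          rw [hHG t ⟨le_of_lt hcase, ht.2⟩]
          exact hnext_proj t ⟨le_of_lt hcase, ht.2⟩
  obtain ⟨cl, h1, h2, h3⟩ := main N (le_refl N)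
  have hNN : ((N:ℝ))/N = 1 := div_self (ne_of_gt hNpos)
  rw [hNN] at h1 h3
  exact ⟨cl, h1, h2, h3⟩
-- ## Monodromy: the endpoint of a lift is a homotopy invariant

lemma endpoint_key {h : ℝ × ℝ → Torus2} (hc : Continuous h) {x0 : Plane}
    (h00 : ∀ s, h (s, 0) = proj x0) (h11 : ∀ s s', h (s, 1) = h (s', 1)) (s₀ : ℝ) :
    ∃ ε > 0, ∃ ee : Plane, ∀ s ∈ Icc (s₀ - ε) (s₀ + ε), ∀ cl,
      RowLiftOn (fun t => h (s, t)) x0 cl → cl 1 = ee := by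
  have hrowc : ∀ s : ℝ, Continuous fun t => h (s, t) :=
    fun s => hc.comp (continuous_const.prodMk continuous_id)
  have hex : ∀ s : ℝ, ∃ cl, RowLiftOn (fun t => h (s, t)) x0 cl :=
    fun s => lift_exists (hrowc s) (h00 s).symm
  -- Lebesgue number for the segment {s₀} × [0,1]
  have hseg : IsCompact ((fun t : ℝ => (s₀, t)) '' Icc 0 1) :=
    isCompact_Icc.image (continuous_const.prodMk continuous_id)
  have hcover : ((fun t : ℝ => (s₀, t)) '' Icc 0 1) ⊆
      ⋃ z : Torus2, h ⁻¹' (U (rep z)) := by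
    rintro p -
    refine mem_iUnion.mpr ⟨h p, ?_⟩
    show h p ∈ U (rep (h p))
    have := mem_U_self (rep (h p))
    rwa [proj_rep] at this
  obtain ⟨δ, hδpos, hδ⟩ := lebesgue_number_lemma_of_metric hseg
    (fun z => (U_open (rep z)).preimage hc) hcover
  obtain ⟨n, hn⟩ := exists_nat_one_div_lt hδpos
  set N : ℕ := n + 1 with hN
  have hNpos : 0 < (N:ℝ) := by positivity
  have hstep : 1 / (N:ℝ) < δ := by
    have he : ((n:ℝ) + 1) = (N:ℝ) := by rw [hN]; push_cast; ring
    rwa [he] at hn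
  set ε : ℝ := δ/2 with hε
  have hεpos : 0 < ε := by positivity
  set J : Set ℝ := Icc (s₀ - ε) (s₀ + ε) with hJ
  have hs₀J : s₀ ∈ J := by
    rw [hJ]
    constructor <;> linarith
  -- rectangles map into evenly covered sets
  have hrect : ∀ j : ℕ, j < N → ∃ z : Torus2, ∀ s ∈ J, ∀ t ∈ Icc ((j:ℝ)/N) ((j+1:ℝ)/N),
      h (s, t) ∈ U (rep z) := by
    intro j hj
    have htj : (j:ℝ)/N ∈ Icc (0:ℝ) 1 := by
      constructor
      · positivity
      · rw [div_le_one hNpos]; exact_mod_cast le_of_lt hj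
    obtain ⟨z, hz⟩ := hδ (s₀, (j:ℝ)/N) ⟨(j:ℝ)/N, htj, rfl⟩
    refine ⟨z, fun s hs t ht => ?_⟩
    apply hz
    rw [mem_ball, Prod.dist_eq]
    have h1 : dist s s₀ ≤ ε := by
      rw [Real.dist_eq, abs_le]
      constructor <;> [linarith [hs.1]; linarith [hs.2]]
    have h2 : dist t ((j:ℝ)/N) ≤ 1/N := by
      rw [Real.dist_eq, abs_le]
      have : ((j:ℝ)+1)/N - (j:ℝ)/N = 1/N := by field_simp; ring
      constructor
      · have := ht.1; linarith [one_div_pos.mpr hNpos]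
      · have := ht.2; linarith
    have hεδ : ε < δ := by rw [hε]; linarith
    calc max (dist s s₀) (dist t ((j:ℝ)/N)) ≤ max ε (1/N) :=
          max_le_max h1 h2
    _ < δ := max_lt hεδ hstep
  -- the inductive construction of the common endpoint function
  have IND : ∀ j : ℕ, j ≤ N → ∃ e : ℝ → Plane, ContinuousOn e J ∧
      ∀ s ∈ J, ∀ cl, RowLiftOn (fun t => h (s, t)) x0 cl → cl ((j:ℝ)/N) = e s := by
    intro j
    induction j with
    | zero =>
      intro _
      refine ⟨fun _ => x0, continuousOn_const, fun s hs cl hcl => ?_⟩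
      have hz0 : ((0:ℕ):ℝ)/(N:ℝ) = 0 := by norm_num
      rw [hz0]
      exact hcl.2.1
    | succ j ih =>
      intro hj1
      have hjN : j < N := Nat.lt_of_succ_le hj1
      obtain ⟨e, hec, he⟩ := ih (le_of_lt hjN)
      obtain ⟨z, hz⟩ := hrect j hjN
      set tj : ℝ := (j:ℝ)/N with htj_def
      set tj1 : ℝ := ((j:ℝ)+1)/N with htj1_def
      have htjj : tj ≤ tj1 := by
        rw [htj_def, htj1_def]
        gcongr <;> linarith
      have htj_mem : tj ∈ Icc (0:ℝ) 1 := by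
        constructor
        · positivity
        · rw [div_le_one hNpos]; exact_mod_cast le_of_lt hjN
      have htj1_mem : tj1 ∈ Icc (0:ℝ) 1 := by
        constructor
        · positivity
        · rw [htj1_def, div_le_one hNpos]
          have : ((j:ℝ)+1) = ((j+1:ℕ):ℝ) := by push_cast; ring
          rw [this]
          exact_mod_cast hj1
      have htj_in : tj ∈ Icc tj tj1 := ⟨le_refl _, htjj⟩
      -- the new endpoint function
      set e' : ℝ → Plane := fun s =>
        tau (rep z) (h (s, tj1)) + (e s - tau (rep z) (h (s, tj))) with he'_def
      refine ⟨e', ?_, ?_⟩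
      · -- continuity
        have hc1 : ContinuousOn (fun s => tau (rep z) (h (s, tj1))) J := by
          apply (tau_continuousOn (rep z)).comp
            (hc.comp (continuous_id.prodMk continuous_const)).continuousOn
          intro s hs
          exact hz s hs tj1 ⟨htjj, le_refl _⟩
        have hc2 : ContinuousOn (fun s => tau (rep z) (h (s, tj))) J := by
          apply (tau_continuousOn (rep z)).comp
            (hc.comp (continuous_id.prodMk continuous_const)).continuousOn
          intro s hs
          exact hz s hs tj htj_in
        exact hc1.add (hec.sub hc2)
      · intro s hs cl hcl
        -- the lattice offset
        have hlat : e s - tau (rep z) (h (s, tj)) ∈ (Lattice2 : Set Plane) := by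
          obtain ⟨cl₀, hcl₀⟩ := hex s
          have h1 : cl₀ tj = e s := he s hs cl₀ hcl₀
          have h2 : proj (cl₀ tj) = h (s, tj) := hcl₀.2.2 tj htj_mem
          have h3 : proj (tau (rep z) (h (s, tj))) = h (s, tj) :=
            proj_tau (hz s hs tj htj_in)
          show e s - tau (rep z) (h (s, tj)) ∈ Lattice2
          rw [← proj_eq_iff, ← h1, h2, h3]
        -- uniqueness of lifts on [tj, tj1]
        set c₂ : ℝ → Plane := fun t =>
          tau (rep z) (h (s, t)) + (e s - tau (rep z) (h (s, tj))) with hc₂_def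
        have hc₂c : ContinuousOn c₂ (Icc tj tj1) := by
          apply ContinuousOn.add ?_ continuousOn_const
          apply (tau_continuousOn (rep z)).comp
            (hc.comp (continuous_const.prodMk continuous_id)).continuousOn
          intro t ht
          exact hz s hs t ht
        have hsub_unit : Icc tj tj1 ⊆ Icc (0:ℝ) 1 := fun t ht =>
          ⟨le_trans htj_mem.1 ht.1, le_trans ht.2 htj1_mem.2⟩
        have huniq := lift_unique htjj (c := fun t => h (s, t))
          (hcl.1.mono hsub_unit) hc₂c
          (fun t ht => hcl.2.2 t (hsub_unit ht))
          (fun t ht => by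
            rw [hc₂_def]
            simp only
            rw [proj_add_lattice hlat, proj_tau (hz s hs t ht)])
          (by
            rw [hc₂_def]
            simp only
            rw [he s hs cl hcl]
            have h3 : tau (rep z) (h (s, tj)) + (e s - tau (rep z) (h (s, tj))) = e s := by
              abel
            rw [h3])
        have hfin := huniq tj1 ⟨htjj, le_refl _⟩
        have hcast : ((j+1:ℕ):ℝ)/(N:ℝ) = tj1 := by rw [htj1_def]; push_cast; ring
        rw [hcast, hfin]
  obtain ⟨e, hec, he⟩ := IND N (le_refl N)
  have hNN : ((N:ℝ))/N = 1 := div_self (ne_of_gt hNpos)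
  rw [hNN] at he
  -- e is constant on J by discreteness
  have hproj : ∀ s' ∈ J, proj (e s') = h (s', 1) := by
    intro s' hs'
    obtain ⟨cl₀, hcl₀⟩ := hex s'
    rw [← he s' hs' cl₀ hcl₀]
    exact hcl₀.2.2 1 ⟨zero_le_one, le_refl _⟩
  have hconst : ∀ s ∈ J, e s = e s₀ := by
    intro s hs
    have key : (fun s' => e s' - e s₀) s = (fun s' => e s' - e s₀) s₀ := by
      apply lattice_const_on isPreconnected_Icc (hec.sub continuousOn_const) ?_ hs hs₀J
      intro s' hs'
      show e s' - e s₀ ∈ Lattice2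
      rw [← proj_eq_iff, hproj s' hs', hproj s₀ hs₀J, h11]
    have : e s - e s₀ = e s₀ - e s₀ := key
    rw [sub_self] at this
    exact sub_eq_zero.mp this
  refine ⟨ε, hεpos, e s₀, fun s hs cl hcl => ?_⟩
  rw [he s hs cl hcl, hconst s hs]

/-- The endpoint of a lift of a row, as a function of the row parameter, is
globally constant. -/
lemma endpoint_const {h : ℝ × ℝ → Torus2} (hc : Continuous h) {x0 : Plane}
    (h00 : ∀ s, h (s, 0) = proj x0) (h11 : ∀ s s', h (s, 1) = h (s', 1)) :
    ∀ s s' cl cl', RowLiftOn (fun t => h (s, t)) x0 cl →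
      RowLiftOn (fun t => h (s', t)) x0 cl' → cl 1 = cl' 1 := by
  have hrowc : ∀ s : ℝ, Continuous fun t => h (s, t) :=
    fun s => hc.comp (continuous_const.prodMk continuous_id)
  have hex : ∀ s : ℝ, ∃ cl, RowLiftOn (fun t => h (s, t)) x0 cl :=
    fun s => lift_exists (hrowc s) (h00 s).symm
  -- the endpoint function via choice
  set E : ℝ → Plane := fun s => (hex s).choose 1 with hE
  have hEspec : ∀ s, RowLiftOn (fun t => h (s, t)) x0 ((hex s).choose) :=
    fun s => (hex s).choose_spec
  have hkey : ∀ s₀ : ℝ, ∃ ε > 0, ∀ s ∈ Icc (s₀ - ε) (s₀ + ε), ∀ cl,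
      RowLiftOn (fun t => h (s, t)) x0 cl → cl 1 = E s₀ := by
    intro s₀
    obtain ⟨ε, hεpos, ee, hee⟩ := endpoint_key hc h00 h11 s₀
    refine ⟨ε, hεpos, fun s hs cl hcl => ?_⟩
    rw [hee s hs cl hcl]
    have hs₀ : s₀ ∈ Icc (s₀ - ε) (s₀ + ε) := by constructor <;> linarith
    rw [hE]
    simp only
    rw [hee s₀ hs₀ _ (hEspec s₀)]
  -- E is locally constant, hence constant on ℝ
  have hEconst : ∀ s s', E s = E s' := by
    have hopen : ∀ b : Plane, IsOpen {s : ℝ | E s = b} := by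
      intro b
      rw [isOpen_iff_forall_mem_open]
      intro s₀ hs₀
      obtain ⟨ε, hεpos, hkey'⟩ := hkey s₀
      refine ⟨Ioo (s₀ - ε) (s₀ + ε), ?_, isOpen_Ioo, by constructor <;> linarith⟩
      intro s hs
      have h1 : E s = E s₀ := hkey' s ⟨le_of_lt hs.1, le_of_lt hs.2⟩ _ (hEspec s)
      show E s = b
      rw [h1]; exact hs₀
    intro s s'
    set Sset : Set ℝ := {u : ℝ | E u = E s} with hSset
    have h1 : IsOpen Sset := hopen (E s)
    have h2 : IsOpen Ssetᶜ := by
      rw [isOpen_iff_forall_mem_open]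
      intro u hu
      obtain ⟨ε, hεpos, hkey'⟩ := hkey u
      refine ⟨Ioo (u - ε) (u + ε), ?_, isOpen_Ioo, by constructor <;> linarith⟩
      intro v hv
      have h1' : E v = E u := hkey' v ⟨le_of_lt hv.1, le_of_lt hv.2⟩ _ (hEspec v)
      intro hvS
      apply hu
      show E u = E s
      rw [← h1']; exact hvS
    have hclopen : IsClopen Sset := ⟨isOpen_compl_iff.mp h2, h1⟩
    rcases isClopen_iff.mp hclopen with hemp | huniv
    · exfalso
      have : s ∈ Sset := rfl
      rw [hemp] at this
      exact this
    · have : s' ∈ Sset := by rw [huniv]; trivial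
      exact this.symm
  intro s s' cl cl' hcl hcl'
  obtain ⟨ε, hεpos, hk⟩ := hkey s
  have h1 : cl 1 = E s := hk s (by constructor <;> linarith) cl hcl
  obtain ⟨ε', hεpos', hk'⟩ := hkey s'
  have h2 : cl' 1 = E s' := hk' s' (by constructor <;> linarith) cl' hcl'
  rw [h1, h2, hEconst s s']
-- ## Monodromy: no nontrivial deck translation inside an inessential component

/-- clamping map ℝ → I -/
def clamp (t : ℝ) : unitInterval := Set.projIcc 0 1 zero_le_one t

lemma clamp_continuous : Continuous clamp :=
  (continuous_projIcc : Continuous (Set.projIcc (0:ℝ) 1 zero_le_one))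

lemma clamp_zero : clamp 0 = 0 := by
  simp [clamp, Set.projIcc_left]

lemma clamp_one : clamp 1 = 1 := by
  simp [clamp, Set.projIcc_right]

lemma deck_trivial_of_inessential {V : Set Torus2} (hV : IsOpen V)
    (hVin : InessentialOpen V) {x : Plane} {w : IntVec}
    (hx : x ∈ proj ⁻¹' V)
    (hxw : x + ivec w ∈ connectedComponentIn (proj ⁻¹' V) x) : w = 0 := by
  set VP : Set Plane := proj ⁻¹' V with hVP
  have hVPopen : IsOpen VP := hV.preimage proj_continuous
  set C : Set Plane := connectedComponentIn VP x with hC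
  have hCopen : IsOpen C := hVPopen.connectedComponentIn
  have hCconn : IsConnected C := isConnected_connectedComponentIn_iff.mpr hx
  have hCpath : IsPathConnected C := (hCopen.isConnected_iff_isPathConnected).mp hCconn
  have hxC : x ∈ C := mem_connectedComponentIn hx
  have hJoined : JoinedIn C x (x + ivec w) := hCpath.joinedIn x hxC _ hxw
  set p : Path x (x + ivec w) := hJoined.somePath with hp
  have hprange : ∀ t, p t ∈ C := hJoined.somePath_mem
  -- project to a loop in V
  have hye : proj x = proj (x + ivec w) := (proj_add_ivec x w).symm
  set γ : Path (proj x) (proj x) := (p.map proj_continuous).cast rfl hye with hγ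
  have hγcoe : ∀ t, γ t = proj (p t) := fun t => rfl
  have hγrange : Set.range ⇑γ ⊆ V := by
    rintro _ ⟨t, rfl⟩
    rw [hγcoe]
    have h1 : p t ∈ C := hprange t
    have h2 : C ⊆ VP := connectedComponentIn_subset _ _
    exact h2 h1
  obtain ⟨H⟩ := hVin (proj x) γ hγrange
  -- build the clamped homotopy
  set h : ℝ × ℝ → Torus2 := fun q => H (clamp q.1, clamp q.2) with hh
  have hhc : Continuous h := by
    apply H.continuous.comp
    exact (clamp_continuous.comp continuous_fst).prodMk
      (clamp_continuous.comp continuous_snd)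
  have h00 : ∀ s, h (s, 0) = proj x := by
    intro s
    show H (clamp s, clamp 0) = proj x
    rw [clamp_zero]
    have := H.eq_fst (clamp s) (show (0:unitInterval) ∈ ({0,1} : Set unitInterval) by left; rfl)
    rw [this]
    show γ 0 = proj x
    simp
  have h11 : ∀ s s', h (s, 1) = h (s', 1) := by
    intro s s'
    show H (clamp s, clamp 1) = H (clamp s', clamp 1)
    rw [clamp_one]
    have h1 := H.eq_fst (clamp s) (show (1:unitInterval) ∈ ({0,1} : Set unitInterval) by right; rfl)
    have h2 := H.eq_fst (clamp s') (show (1:unitInterval) ∈ ({0,1} : Set unitInterval) by right; rfl)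
    rw [h1, h2]
  -- rows
  have hrow0 : RowLiftOn (fun t => h (0, t)) x (fun t => p (clamp t)) := by
    refine ⟨(p.continuous.comp clamp_continuous).continuousOn, ?_, ?_⟩
    · show p (clamp 0) = x
      rw [clamp_zero]
      simp
    · intro t _
      show proj (p (clamp t)) = H (clamp 0, clamp t)
      rw [clamp_zero]
      have := H.apply_zero (clamp t)
      rw [this]
      rfl
  have hrow1 : RowLiftOn (fun t => h (1, t)) x (fun _ => x) := by
    refine ⟨continuousOn_const, rfl, ?_⟩
    intro t _
    show proj x = H (clamp 1, clamp t)
    rw [clamp_one]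
    have := H.apply_one (clamp t)
    rw [this]
    show proj x = (Path.refl (proj x)) (clamp t)
    simp
  have hend := endpoint_const hhc h00 h11 0 1 _ _ hrow0 hrow1
  rw [clamp_one] at hend
  have hpe : p 1 = x + ivec w := by simp
  rw [hpe] at hend
  have : ivec w = 0 := by
    have h' : x + ivec w = x + 0 := by rw [add_zero]; exact hend
    exact add_left_cancel h'
  have h0 : ivec w = ivec 0 := by
    rw [this]
    show (0:Plane) = ivec 0
    have : ivec (0 : IntVec) = ivecHom 0 := rfl
    rw [this, map_zero]
  exact ivec_injective h0
-- ## zIter facts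

lemma zIter_homeo {X : Type*} [TopologicalSpace X] (g : X ≃ₜ X) (j : ℤ) :
    ∃ e : X ≃ₜ X, zIter g j = ⇑e := by
  induction j using Int.induction_on with
  | zero =>
    refine ⟨Homeomorph.refl X, ?_⟩
    show ⇑(g.toEquiv ^ (0:ℤ)) = _
    rw [zpow_zero]
    rfl
  | succ j ih =>
    obtain ⟨e, he⟩ := ih
    refine ⟨(g.trans e), ?_⟩
    show ⇑(g.toEquiv ^ ((j:ℤ) + 1)) = _
    rw [zpow_add_one]
    funext x
    have h1 : (g.toEquiv ^ (j:ℤ) * g.toEquiv) x = (g.toEquiv ^ (j:ℤ)) (g.toEquiv x) :=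
      Equiv.Perm.mul_apply _ _ _
    rw [h1]
    have h2 : (g.toEquiv ^ (j:ℤ)) (g.toEquiv x) = zIter g j (g x) := rfl
    rw [h2, he]
    rfl
  | pred j ih =>
    obtain ⟨e, he⟩ := ih
    refine ⟨(g.symm.trans e), ?_⟩
    show ⇑(g.toEquiv ^ (-(j:ℤ) - 1)) = _
    rw [zpow_sub_one]
    funext x
    have h1 : (g.toEquiv ^ (-(j:ℤ)) * (g.toEquiv)⁻¹) x =
        (g.toEquiv ^ (-(j:ℤ))) ((g.toEquiv)⁻¹ x) := Equiv.Perm.mul_apply _ _ _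
    rw [h1]
    have h3 : (g.toEquiv)⁻¹ x = g.symm x := rfl
    rw [h3]
    have h2 : (g.toEquiv ^ (-(j:ℤ))) (g.symm x) = zIter g (-(j:ℤ)) (g.symm x) := rfl
    rw [h2, he]
    rfl

lemma zIter_succ {X : Type*} [TopologicalSpace X] (g : X ≃ₜ X) (j : ℤ) (x : X) :
    zIter g (j + 1) x = zIter g j (g x) := by
  show (g.toEquiv ^ (j + 1)) x = (g.toEquiv ^ j) (g.toEquiv x)
  rw [zpow_add_one]
  exact Equiv.Perm.mul_apply _ _ _

lemma zIter_pred {X : Type*} [TopologicalSpace X] (g : X ≃ₜ X) (j : ℤ) (x : X) :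
    zIter g (j - 1) x = zIter g j (g.symm x) := by
  show (g.toEquiv ^ (j - 1)) x = (g.toEquiv ^ j) (g.symm x)
  rw [zpow_sub_one]
  exact Equiv.Perm.mul_apply _ _ _

lemma zIter_zero {X : Type*} [TopologicalSpace X] (g : X ≃ₜ X) (x : X) :
    zIter g 0 x = x := by
  show (g.toEquiv ^ (0:ℤ)) x = x
  rw [zpow_zero]
  rfl

lemma proj_symm_lift {f : Torus2 ≃ₜ Torus2} {fh : Plane ≃ₜ Plane} (hlift : IsLift f fh) :
    ∀ x : Plane, proj (fh.symm x) = f.symm (proj x) := by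
  intro x
  apply f.injective
  have h1 : proj (fh (fh.symm x)) = f (proj (fh.symm x)) := congrFun hlift (fh.symm x)
  rw [fh.apply_symm_apply] at h1
  rw [← h1, f.apply_symm_apply]

lemma proj_zIter {f : Torus2 ≃ₜ Torus2} {fh : Plane ≃ₜ Plane} (hlift : IsLift f fh) :
    ∀ (j : ℤ) (x : Plane), proj (zIter fh j x) = zIter f j (proj x) := by
  intro j
  induction j using Int.induction_on with
  | zero => intro x; rw [zIter_zero, zIter_zero]
  | succ j ih =>
    intro x
    rw [zIter_succ, zIter_succ, ih]
    have h2 := congrFun hlift x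
    simp only [Function.comp_apply] at h2
    rw [h2]
  | pred j ih =>
    intro x
    have h1 : (-(j:ℤ) - 1) = (-(j:ℤ)) - 1 := rfl
    rw [h1, zIter_pred, zIter_pred, ih, proj_symm_lift hlift]

-- ## translation of connected components in a periodic set

lemma ccIn_translate_sub {S : Set Plane}
    (hS : ∀ (z : Plane) (w : IntVec), z ∈ S → z + ivec w ∈ S) (x : Plane) (w : IntVec) :
    (· + ivec w) '' connectedComponentIn S x ⊆ connectedComponentIn S (x + ivec w) := by
  by_cases hx : x ∈ S
  · apply IsPreconnected.subset_connectedComponentIn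
    · exact isPreconnected_connectedComponentIn.image _
        (continuous_add_right (ivec w)).continuousOn
    · exact ⟨x, mem_connectedComponentIn hx, rfl⟩
    · rintro _ ⟨z, hz, rfl⟩
      exact hS z w (connectedComponentIn_subset _ _ hz)
  · rw [connectedComponentIn_eq_empty hx]
    simp

lemma ccIn_translate {S : Set Plane}
    (hS : ∀ (z : Plane) (w : IntVec), z ∈ S → z + ivec w ∈ S) (x : Plane) (w : IntVec) :
    connectedComponentIn S (x + ivec w) = (· + ivec w) '' connectedComponentIn S x := by
  apply Subset.antisymm ?_ (ccIn_translate_sub hS x w)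
  have h2 := ccIn_translate_sub hS (x + ivec w) (-w)
  have hxw : x + ivec w + ivec (-w) = x := by
    have h3 : ivec (-w) = -ivec w := map_neg ivecHom w
    rw [h3, add_neg_cancel_right]
  rw [hxw] at h2
  intro y hy
  have hyw : y + ivec (-w) ∈ connectedComponentIn S x := h2 ⟨y, hy, rfl⟩
  refine ⟨y + ivec (-w), hyw, ?_⟩
  have h3 : ivec (-w) = -ivec w := map_neg ivecHom w
  show y + ivec (-w) + ivec w = y
  rw [h3, neg_add_cancel_right]
-- ## box compactness and floor decomposition

lemma box_closed : IsClosed {z : Plane | ∀ i, z i ∈ Icc (0:ℝ) 1} := by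
  have : {z : Plane | ∀ i, z i ∈ Icc (0:ℝ) 1} =
      ⋂ i, (fun z : Plane => z i) ⁻¹' (Icc (0:ℝ) 1) := by
    ext z; simp [mem_iInter]
  rw [this]
  apply isClosed_iInter
  intro i
  apply IsClosed.preimage ?_ isClosed_Icc
  exact (EuclideanSpace.proj (𝕜 := ℝ) i).continuous

lemma box_norm_le {z : Plane} (hz : ∀ i, z i ∈ Icc (0:ℝ) 1) : ‖z‖ ≤ 2 := by
  rw [EuclideanSpace.norm_eq]
  have hsum : ∑ i : Fin 2, ‖z i‖ ^ 2 ≤ 4 := by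
    have hterm : ∀ i : Fin 2, ‖z i‖ ^ 2 ≤ 1 := by
      intro i
      rw [Real.norm_eq_abs, sq_abs]
      have h1 := (hz i).1
      have h2 := (hz i).2
      nlinarith
    calc ∑ i : Fin 2, ‖z i‖ ^ 2 ≤ ∑ _i : Fin 2, (1:ℝ) :=
      Finset.sum_le_sum fun i _ => hterm i
    _ = 2 := by simp
    _ ≤ 4 := by norm_num
  calc √(∑ i : Fin 2, ‖z i‖ ^ 2) ≤ √4 := Real.sqrt_le_sqrt hsum
  _ = 2 := by
      rw [show (4:ℝ) = 2^2 by norm_num, Real.sqrt_sq (by norm_num : (0:ℝ) ≤ 2)]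

lemma box_compact : IsCompact {z : Plane | ∀ i, z i ∈ Icc (0:ℝ) 1} := by
  rw [isCompact_iff_isClosed_bounded]
  refine ⟨box_closed, ?_⟩
  apply Bornology.IsBounded.subset (Metric.isBounded_closedBall (x := (0:Plane)) (r := 2))
  intro z hz
  rw [mem_closedBall, dist_zero_right]
  exact box_norm_le hz

lemma floor_decomp (y : Plane) : ∃ w : IntVec,
    (∀ i, (y + ivec (-w)) i ∈ Icc (0:ℝ) 1) ∧ ‖y + ivec (-w)‖ ≤ 2 := by
  refine ⟨fun i => ⌊y i⌋, ?_, ?_⟩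
  · intro i
    have h1 : (y + ivec (-(fun i => ⌊y i⌋))) i = y i - (⌊y i⌋ : ℝ) := by
      have h2 : (y + ivec (-(fun i => ⌊y i⌋))) i = y i + ivec (-(fun i => ⌊y i⌋)) i := rfl
      rw [h2]
      have h4 : (ivec (-(fun i => ⌊y i⌋))) i = ((-(⌊y i⌋) : ℤ) : ℝ) := rfl
      rw [h4]
      push_cast
      ring
    rw [h1]
    constructor
    · linarith [Int.floor_le (y i)]
    · linarith [Int.lt_floor_add_one (y i)]
  · apply box_norm_le
    intro i
    have h1 : (y + ivec (-(fun i => ⌊y i⌋))) i = y i - (⌊y i⌋ : ℝ) := by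
      have h2 : (y + ivec (-(fun i => ⌊y i⌋))) i = y i + ivec (-(fun i => ⌊y i⌋)) i := rfl
      rw [h2]
      have h4 : (ivec (-(fun i => ⌊y i⌋))) i = ((-(⌊y i⌋) : ℤ) : ℝ) := rfl
      rw [h4]
      push_cast
      ring
    rw [h1]
    constructor
    · linarith [Int.floor_le (y i)]
    · linarith [Int.lt_floor_add_one (y i)]

-- ## the key uniform boundedness lemma

lemma uniform_bound {V : Set Torus2} (hV : IsOpen V) (hVin : InessentialOpen V)
    {F : Set Plane} (hFclosed : IsClosed F) (hFV : F ⊆ proj ⁻¹' V)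
    (hFper : ∀ (x : Plane) (w : IntVec), x ∈ F → x + ivec w ∈ F) (R : ℝ) :
    ∃ R', ∀ x ∈ F ∩ closedBall (0:Plane) R,
      ∀ y ∈ connectedComponentIn (proj ⁻¹' V) x ∩ F, ‖y‖ ≤ R' := by
  set VP : Set Plane := proj ⁻¹' V with hVP
  have hVPper : ∀ (z : Plane) (w : IntVec), z ∈ VP → z + ivec w ∈ VP := by
    intro z w hz
    show proj (z + ivec w) ∈ V
    rw [proj_add_ivec]
    exact hz
  by_contra hcon
  push_neg at hcon
  have hseq : ∀ k : ℕ, ∃ x y : Plane, x ∈ F ∩ closedBall (0:Plane) R ∧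
      y ∈ connectedComponentIn VP x ∩ F ∧ (k:ℝ) < ‖y‖ := by
    intro k
    obtain ⟨x, hx, y, hy, hn⟩ := hcon k
    exact ⟨x, y, hx, hy, hn⟩
  choose xs ys hxs hys hns using hseq
  -- decompose ys into fractional and integer parts
  have hdec := fun k => floor_decomp (ys k)
  choose ws hbox hnorm using hdec
  set ηs : ℕ → Plane := fun k => ys k + ivec (-(ws k)) with hηs
  have hηF : ∀ k, ηs k ∈ F := fun k => hFper _ _ (hys k).2
  -- extract convergent subsequences
  obtain ⟨ξ, hξmem, φ₁, hφ₁, hxlim⟩ := IsCompact.tendsto_subseq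
    (isCompact_closedBall (0:Plane) R) (fun k => (hxs k).2)
  obtain ⟨ηl, hηlmem, φ₂, hφ₂, hηlim⟩ := IsCompact.tendsto_subseq
    box_compact (fun k => hbox (φ₁ k))
  set ψ : ℕ → ℕ := φ₁ ∘ φ₂ with hψ
  have hψmono : StrictMono ψ := hφ₁.comp hφ₂
  have hxlim' : Filter.Tendsto (fun k => xs (ψ k)) atTop (nhds ξ) :=
    hxlim.comp hφ₂.tendsto_atTop
  have hηlim' : Filter.Tendsto (fun k => ηs (ψ k)) atTop (nhds ηl) := hηlim
  -- the limits are in F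
  have hξF : ξ ∈ F := hFclosed.mem_of_tendsto hxlim'
    (Filter.Eventually.of_forall fun k => (hxs (ψ k)).1)
  have hηF' : ηl ∈ F := hFclosed.mem_of_tendsto hηlim'
    (Filter.Eventually.of_forall fun k => hηF (ψ k))
  have hξVP : ξ ∈ VP := hFV hξF
  have hηVP : ηl ∈ VP := hFV hηF'
  have hVPopen : IsOpen VP := hV.preimage proj_continuous
  set Cξ : Set Plane := connectedComponentIn VP ξ with hCξ
  set Cη : Set Plane := connectedComponentIn VP ηl with hCη
  have hCξopen : IsOpen Cξ := hVPopen.connectedComponentIn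
  have hCηopen : IsOpen Cη := hVPopen.connectedComponentIn
  -- eventual memberships
  have hevx : ∀ᶠ k in atTop, xs (ψ k) ∈ Cξ :=
    hxlim' (hCξopen.mem_nhds (mem_connectedComponentIn hξVP))
  have hevη : ∀ᶠ k in atTop, ηs (ψ k) ∈ Cη :=
    hηlim' (hCηopen.mem_nhds (mem_connectedComponentIn hηVP))
  obtain ⟨K₀, hK₀⟩ := (hevx.and hevη).exists_forall_of_atTop
  -- norms of the integer parts blow up
  have hwnorm : ∀ k : ℕ, (k:ℝ) - 2 ≤ ‖ivec (ws k)‖ := by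
    intro k
    have h1 : ‖ys k‖ ≤ ‖ηs k‖ + ‖ivec (ws k)‖ := by
      have : ys k = ηs k + ivec (ws k) := by
        rw [hηs]
        simp only
        have h3 : ivec (-(ws k)) = -ivec (ws k) := map_neg ivecHom _
        rw [h3, neg_add_cancel_right]
      rw [this]
      exact norm_add_le _ _
    have h2 : ‖ηs k‖ ≤ 2 := hnorm k
    have h3 : (k:ℝ) < ‖ys k‖ := hns k
    linarith
  -- pick two indices with different integer parts
  set j : ℕ := ψ K₀ with hj
  obtain ⟨K₁, hK₁a⟩ : ∃ K₁ : ℕ, K₀ ≤ K₁ ∧ ‖ivec (ws j)‖ + 2 < (K₁:ℝ) := by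
    obtain ⟨m, hm⟩ := exists_nat_gt (‖ivec (ws j)‖ + 2)
    exact ⟨max K₀ m, le_max_left _ _, lt_of_lt_of_le hm (by exact_mod_cast le_max_right K₀ m)⟩
  obtain ⟨hK₁b, hK₁c⟩ := hK₁a
  set j' : ℕ := ψ K₁ with hj'
  have hwne : ws j ≠ ws j' := by
    intro heq
    have h1 : (j':ℝ) - 2 ≤ ‖ivec (ws j')‖ := hwnorm j'
    have h2 : (K₁:ℝ) ≤ (j':ℝ) := by exact_mod_cast hψmono.le_apply
    rw [← heq] at h1
    linarith
  -- component equalities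
  have hcomp : ∀ k, K₀ ≤ k → connectedComponentIn VP (ξ + ivec (-(ws (ψ k)))) = Cη := by
    intro k hk
    obtain ⟨hxk, hηk⟩ := hK₀ k hk
    -- xs (ψ k) ∈ Cξ so its component is Cξ; ys (ψ k) is in it
    have h1 : Cξ = connectedComponentIn VP (xs (ψ k)) := connectedComponentIn_eq hxk
    have h2 : ys (ψ k) ∈ Cξ := by rw [h1]; exact (hys (ψ k)).1
    -- translate
    have h3 : ηs (ψ k) ∈ connectedComponentIn VP (ξ + ivec (-(ws (ψ k)))) := by
      rw [ccIn_translate hVPper ξ (-(ws (ψ k)))]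
      exact ⟨ys (ψ k), h2, rfl⟩
    have h4 : connectedComponentIn VP (ξ + ivec (-(ws (ψ k)))) =
        connectedComponentIn VP (ηs (ψ k)) := connectedComponentIn_eq h3
    have h5 : connectedComponentIn VP ηl = connectedComponentIn VP (ηs (ψ k)) :=
      connectedComponentIn_eq hηk
    rw [h4, ← h5]
  have hjeq : connectedComponentIn VP (ξ + ivec (-(ws j))) = Cη := hcomp K₀ (le_refl _)
  have hj'eq : connectedComponentIn VP (ξ + ivec (-(ws j'))) = Cη := hcomp K₁ hK₁b
  -- translate back by ws j
  have hkey : connectedComponentIn VP ξ = connectedComponentIn VP (ξ + ivec (ws j - ws j')) := by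
    have t1 := ccIn_translate hVPper (ξ + ivec (-(ws j))) (ws j)
    have t2 := ccIn_translate hVPper (ξ + ivec (-(ws j'))) (ws j)
    have e1 : ξ + ivec (-(ws j)) + ivec (ws j) = ξ := by
      have h3 : ivec (-(ws j)) = -ivec (ws j) := map_neg ivecHom _
      rw [h3, neg_add_cancel_right]
    have e2 : ξ + ivec (-(ws j')) + ivec (ws j) = ξ + ivec (ws j - ws j') := by
      have h3 : ivec (-(ws j')) = -ivec (ws j') := map_neg ivecHom _
      have h4 : ivec (ws j - ws j') = ivec (ws j) - ivec (ws j') := map_sub ivecHom _ _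
      rw [h3, h4]
      abel
    rw [e1] at t1
    rw [e2] at t2
    rw [t1, t2, hjeq, hj'eq]
  -- contradiction with monodromy
  have hmem : ξ + ivec (ws j - ws j') ∈ connectedComponentIn VP ξ := by
    rw [hkey]
    apply mem_connectedComponentIn
    exact hVPper ξ _ hξVP
  have := deck_trivial_of_inessential hV hVin hξVP hmem
  have hsub : ws j - ws j' = 0 := this
  apply hwne
  have := sub_eq_zero.mp hsub
  exact this
-- ## closedness of pieces

lemma piece_closed {VP F : Set Plane} (hVPopen : IsOpen VP) (hFclosed : IsClosed F)
    (hFV : F ⊆ VP) (x : Plane) : IsClosed (connectedComponentIn VP x ∩ F) := by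
  rw [← isOpen_compl_iff]
  rw [isOpen_iff_forall_mem_open]
  intro z hz
  by_cases hzF : z ∈ F
  · have hzVP : z ∈ VP := hFV hzF
    set Cz := connectedComponentIn VP z with hCz
    have hCzopen : IsOpen Cz := hVPopen.connectedComponentIn
    by_cases hzC : z ∈ connectedComponentIn VP x
    · exact absurd ⟨hzC, hzF⟩ hz
    · -- Cz is an open neighborhood disjoint from the piece
      refine ⟨Cz, ?_, hCzopen, mem_connectedComponentIn hzVP⟩
      intro y hyCz
      intro hymem
      obtain ⟨hyC, _⟩ := hymem
      have h1 : connectedComponentIn VP x = connectedComponentIn VP y :=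
        connectedComponentIn_eq hyC
      have h2 : connectedComponentIn VP z = connectedComponentIn VP y :=
        connectedComponentIn_eq hyCz
      apply hzC
      rw [h1, ← h2]
      exact mem_connectedComponentIn hzVP
  · refine ⟨Fᶜ, ?_, hFclosed.isOpen_compl, hzF⟩
    intro y hy hymem
    exact hy hymem.2

lemma unitSquare_preconnected : IsPreconnected unitSquare := by
  apply Convex.isPreconnected
  intro x hx y hy a b ha hb hab
  intro i
  have hxi := hx i
  have hyi := hy i
  have happ : (a • x + b • y) i = a * x i + b * y i := rfl
  rw [happ]
  constructor
  · have := hxi.1; have := hyi.1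
    positivity
  · have h1 := hxi.2; have h2 := hyi.2
    nlinarith [ha, hb]

lemma zero_mem_unitSquare : (0 : Plane) ∈ unitSquare := by
  intro i
  have : (0 : Plane) i = 0 := rfl
  rw [this]
  constructor <;> norm_num

lemma unitSquare_subset_ball : unitSquare ⊆ ball (0:Plane) 3 := by
  intro z hz
  rw [mem_ball, dist_zero_right]
  have := box_norm_le hz
  linarith

end KT

open Metric Set Filter Topology in
theorem exists_surrounding_compact_in_orbit_translates
    (f : Torus2 ≃ₜ Torus2) (fh : Plane ≃ₜ Plane)
    (hlift : IsLift f fh) (hequiv : Equivariant ⇑fh)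
    (δ : ℝ) (hδ : 0 < δ) (hδrot : Metric.ball (0 : Plane) δ ⊆ rotationSet ⇑fh)
    (O : Set Plane) (hOopen : IsOpen O) (hOconn : IsConnected O)
    (hOiness : Inessential (closure (proj '' O)))
    (hOfe : FullyEssential (⋃ n : ℤ, zIter f n '' (proj '' O)))
 :
    ∃ M : ℕ, 0 < M ∧ ∃ K : Set Plane, IsCompact K ∧
      (∃ p : Plane, unitSquare ⊆ connectedComponentIn Kᶜ p ∧
        Bornology.IsBounded (connectedComponentIn Kᶜ p)) ∧
      K ⊆ ⋃ q ∈ SigmaBox (M : ℤ), trSet (zIter fh q.1 '' O) q.2 := by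
  classical
  set A : Set Torus2 := ⋃ n : ℤ, zIter f n '' (proj '' O) with hA
  obtain ⟨V, hVopen, hVsub, hVin⟩ := hOfe
  have hAopen : IsOpen A := by
    apply isOpen_iUnion
    intro n
    obtain ⟨e, he⟩ := KT.zIter_homeo f n
    rw [he]
    exact e.isOpenMap _ (KT.proj_isOpenMap _ hOopen)
  set F : Set Plane := proj ⁻¹' Aᶜ with hF
  have hFclosed : IsClosed F := (hAopen.isClosed_compl).preimage KT.proj_continuous
  set VP : Set Plane := proj ⁻¹' V with hVP
  have hFV : F ⊆ VP := fun x hx => hVsub hx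
  have hVPopen : IsOpen VP := hVopen.preimage KT.proj_continuous
  have hFper : ∀ (x : Plane) (w : IntVec), x ∈ F → x + ivec w ∈ F := by
    intro x w hx
    show proj (x + ivec w) ∈ Aᶜ
    rw [KT.proj_add_ivec]
    exact hx
  -- uniform bound for pieces meeting the ball of radius 3
  obtain ⟨R₀, hR₀⟩ := KT.uniform_bound hVopen hVin hFclosed hFV hFper 3
  set Rb : ℝ := max R₀ 3 with hRb
  have hRb3 : (3:ℝ) ≤ Rb := le_max_right _ _
  have hub : ∀ x ∈ F ∩ closedBall (0:Plane) 3,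
      ∀ y ∈ connectedComponentIn VP x ∩ F, ‖y‖ ≤ Rb :=
    fun x hx y hy => le_trans (hR₀ x hx y hy) (le_max_left _ _)
  -- the set of centres whose piece meets the ball of radius 3
  set S : Set Plane :=
    {x | x ∈ F ∧ (connectedComponentIn VP x ∩ F ∩ closedBall (0:Plane) 3).Nonempty}
    with hS
  have hbound : ∀ x ∈ S, ∀ y ∈ connectedComponentIn VP x ∩ F, ‖y‖ ≤ Rb := by
    rintro x ⟨hxF, x₀, ⟨hx₀C, hx₀F⟩, hx₀B⟩ y hy
    have he : connectedComponentIn VP x = connectedComponentIn VP x₀ :=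
      connectedComponentIn_eq hx₀C
    rw [he] at hy
    exact hub x₀ ⟨hx₀F, hx₀B⟩ y hy
  -- choice of thickening radii
  have hPexists : ∀ x : Plane, ∃ e : ℝ, 0 < e ∧ e ≤ 1 ∧ (x ∈ S →
      ∀ z ∈ F, z ∉ connectedComponentIn VP x →
      ∀ p ∈ connectedComponentIn VP x ∩ F, 2 * e ≤ dist z p) := by
    intro x
    by_cases hxS : x ∈ S
    · set P : Set Plane := connectedComponentIn VP x ∩ F with hP
      have hPclosed : IsClosed P := KT.piece_closed hVPopen hFclosed hFV x
      have hPbounded : Bornology.IsBounded P := by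
        apply (Metric.isBounded_closedBall (x := (0:Plane)) (r := Rb)).subset
        intro y hy
        rw [mem_closedBall, dist_zero_right]
        exact hbound x hxS y hy
      have hPcompact : IsCompact P := isCompact_iff_isClosed_bounded.mpr ⟨hPclosed, hPbounded⟩
      have htarget : IsOpen (F ∩ (connectedComponentIn VP x)ᶜ)ᶜ := by
        rw [isOpen_compl_iff]
        exact hFclosed.inter (hVPopen.connectedComponentIn).isClosed_compl
      have hPsub : P ⊆ (F ∩ (connectedComponentIn VP x)ᶜ)ᶜ := by
        rintro p ⟨hpC, hpF⟩ ⟨_, hpc⟩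
        exact hpc hpC
      obtain ⟨ε, hεpos, hεsub⟩ := hPcompact.exists_thickening_subset_open htarget hPsub
      refine ⟨min (ε/2) 1, by positivity, min_le_right _ _, ?_⟩
      intro _ z hzF hzC p hpP
      have hz_not : z ∉ thickening ε P := by
        intro hz
        exact (hεsub hz) ⟨hzF, hzC⟩
      rw [Metric.mem_thickening_iff] at hz_not
      push_neg at hz_not
      have h1 : ε ≤ dist z p := hz_not p hpP
      have h2 : min (ε/2) 1 ≤ ε/2 := min_le_left _ _
      linarith
    · exact ⟨1, one_pos, le_refl _, fun h => absurd h hxS⟩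
  choose eps heps0 heps1 hepsS using hPexists
  -- the bounded open set G
  set G : Set Plane := ball (0:Plane) 3 ∪
      ⋃ (x) (_ : x ∈ S), thickening (eps x) (connectedComponentIn VP x ∩ F) with hG
  have hGopen : IsOpen G := by
    apply IsOpen.union isOpen_ball
    exact isOpen_iUnion fun x => isOpen_iUnion fun _ => isOpen_thickening
  have hGsub : G ⊆ closedBall (0:Plane) (Rb + 1) := by
    rintro z (hz | hz)
    · rw [mem_closedBall, dist_zero_right]
      rw [mem_ball, dist_zero_right] at hz
      linarith
    · rw [mem_iUnion] at hz
      obtain ⟨x, hz⟩ := hz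
      rw [mem_iUnion] at hz
      obtain ⟨hxS, hz⟩ := hz
      rw [Metric.mem_thickening_iff] at hz
      obtain ⟨p, hpP, hpd⟩ := hz
      have h1 : ‖p‖ ≤ Rb := hbound x hxS p hpP
      have h2 : dist z p < 1 := lt_of_lt_of_le hpd (heps1 x)
      rw [mem_closedBall, dist_zero_right]
      calc ‖z‖ ≤ dist z p + ‖p‖ := by
            rw [dist_eq_norm]
            have hzp : z - p + p = z := by abel
            calc ‖z‖ = ‖z - p + p‖ := by rw [hzp]
            _ ≤ ‖z - p‖ + ‖p‖ := norm_add_le _ _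
      _ ≤ Rb + 1 := by linarith
  have hGbounded : Bornology.IsBounded G :=
    (Metric.isBounded_closedBall (x := (0:Plane)) (r := Rb+1)).subset hGsub
  -- K is the frontier of G
  set K : Set Plane := frontier G with hK
  have hKcompact : IsCompact K := by
    rw [isCompact_iff_isClosed_bounded]
    refine ⟨isClosed_frontier, ?_⟩
    apply (Metric.isBounded_closedBall (x := (0:Plane)) (r := Rb+1)).subset
    calc K ⊆ closure G := frontier_subset_closure
    _ ⊆ closedBall 0 (Rb+1) := closure_minimal hGsub Metric.isClosed_closedBall
  have hKG : K ∩ G = ∅ := by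
    rw [hK, hGopen.frontier_eq]
    ext z
    simp only [mem_inter_iff, mem_diff, mem_empty_iff_false, iff_false]
    rintro ⟨⟨_, h2⟩, h3⟩
    exact h2 h3
  -- main claim: the frontier avoids F
  have hKF : ∀ z ∈ K, z ∉ F := by
    intro z hzK hzF
    have hzVP : z ∈ VP := hFV hzF
    have hznotG : z ∉ G := by
      intro h
      have : z ∈ K ∩ G := ⟨hzK, h⟩
      rw [hKG] at this
      exact this
    have hzS_contra : z ∉ S := by
      intro hzS
      apply hznotG
      rw [hG]
      right
      rw [mem_iUnion]
      refine ⟨z, ?_⟩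
      rw [mem_iUnion]
      refine ⟨hzS, ?_⟩
      exact self_subset_thickening (heps0 z) _ ⟨mem_connectedComponentIn hzVP, hzF⟩
    have hzclosure : z ∈ closure G := frontier_subset_closure hzK
    rw [hG, closure_union] at hzclosure
    rcases hzclosure with hz3 | hzcl
    · -- z is within distance 3 of the origin, so z ∈ S, contradiction
      apply hzS_contra
      refine ⟨hzF, z, ⟨mem_connectedComponentIn hzVP, hzF⟩, ?_⟩
      exact Metric.closure_ball_subset_closedBall hz3
    · -- z is a limit of points of the thickenings
      rw [mem_closure_iff_seq_limit] at hzcl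
      obtain ⟨u, hu, hulim⟩ := hzcl
      have humem : ∀ m : ℕ, ∃ x, x ∈ S ∧
          u m ∈ thickening (eps x) (connectedComponentIn VP x ∩ F) := by
        intro m
        have := hu m
        rw [mem_iUnion] at this
        obtain ⟨x, hx⟩ := this
        rw [mem_iUnion] at hx
        obtain ⟨hxS, hx⟩ := hx
        exact ⟨x, hxS, hx⟩
      choose xm hxmS hum using humem
      by_cases hcase : ∃ m, z ∈ connectedComponentIn VP (xm m)
      · obtain ⟨m, hzC⟩ := hcase
        apply hzS_contra
        have he : connectedComponentIn VP (xm m) = connectedComponentIn VP z :=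
          connectedComponentIn_eq hzC
        obtain ⟨_, hne⟩ := hxmS m
        rw [he] at hne
        exact ⟨hzF, hne⟩
      · push_neg at hcase
        -- quantitative estimate: pieces approach z
        have hp : ∀ m : ℕ, ∃ p, p ∈ connectedComponentIn VP (xm m) ∩ F ∧
            dist (u m) p < eps (xm m) := by
          intro m
          have := hum m
          rw [Metric.mem_thickening_iff] at this
          obtain ⟨p, hp1, hp2⟩ := this
          exact ⟨p, hp1, hp2⟩
        choose pm hpmP hpmd using hp
        have hest : ∀ m : ℕ, dist z (pm m) ≤ 2 * dist z (u m) := by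
          intro m
          have h1 : 2 * eps (xm m) ≤ dist z (pm m) :=
            hepsS (xm m) (hxmS m) z hzF (hcase m) (pm m) (hpmP m)
          have h2 : dist z (pm m) ≤ dist z (u m) + dist (u m) (pm m) := dist_triangle _ _ _
          have h3 : dist (u m) (pm m) < eps (xm m) := hpmd m
          -- 2e ≤ d(z,p) ≤ d(z,u) + e' with e' < e gives e < d(z,u)
          have h4 : eps (xm m) < dist z (u m) := by linarith
          linarith
        have hdzu : Tendsto (fun m => dist z (u m)) atTop (nhds 0) := by
          have h5 := Filter.Tendsto.dist
            (tendsto_const_nhds : Tendsto (fun _ : ℕ => z) atTop (nhds z)) hulim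
          simpa using h5
        have hpmlim : Tendsto pm atTop (nhds z) := by
          rw [tendsto_iff_dist_tendsto_zero]
          have hsq : Tendsto (fun m => 2 * dist z (u m)) atTop (nhds 0) := by
            have h2 := hdzu.const_mul (2:ℝ)
            simpa using h2
          exact squeeze_zero (fun m => dist_nonneg)
            (fun m => by rw [dist_comm]; exact hest m) hsq
        -- eventually pm is in the component of z
        have hCz : IsOpen (connectedComponentIn VP z) := hVPopen.connectedComponentIn
        have hev : ∀ᶠ m in atTop, pm m ∈ connectedComponentIn VP z :=
          hpmlim (hCz.mem_nhds (mem_connectedComponentIn hzVP))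
        obtain ⟨m, hm⟩ := hev.exists
        apply hcase m
        have h1 : connectedComponentIn VP z = connectedComponentIn VP (pm m) :=
          connectedComponentIn_eq hm
        have h2 : connectedComponentIn VP (xm m) = connectedComponentIn VP (pm m) :=
          connectedComponentIn_eq (hpmP m).1
        rw [h2, ← h1]
        exact mem_connectedComponentIn hzVP
  -- K is contained in the union of all integer translates of all iterates of O
  have hKW : K ⊆ ⋃ q : ℤ × IntVec, trSet (zIter fh q.1 '' O) q.2 := by
    intro z hz
    have hzA : proj z ∈ A := by
      by_contra hzA
      exact hKF z hz hzA
    rw [hA, mem_iUnion] at hzA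
    obtain ⟨n, hn⟩ := hzA
    obtain ⟨y', ⟨y, hyO, rfl⟩, hyz⟩ := hn
    have h1 : proj (zIter fh n y) = proj z := by
      rw [KT.proj_zIter hlift]
      exact hyz
    have h2 : z - zIter fh n y ∈ Lattice2 := by
      rw [← KT.proj_eq_iff]
      exact h1.symm
    obtain ⟨v, hv⟩ := h2
    rw [mem_iUnion]
    refine ⟨(n, v), ?_⟩
    refine ⟨zIter fh n y, ⟨y, hyO, rfl⟩, ?_⟩
    show zIter fh n y + ivec v = z
    rw [show ivec v = ivecHom v from rfl, hv]
    abel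
  -- extract a finite subcover
  have hopen_tr : ∀ q : ℤ × IntVec, IsOpen (trSet (zIter fh q.1 '' O) q.2) := by
    intro q
    obtain ⟨e, he⟩ := KT.zIter_homeo fh q.1
    rw [he]
    exact (isOpenMap_add_right (ivec q.2)) _ (e.isOpenMap _ hOopen)
  obtain ⟨t, ht⟩ := hKcompact.elim_finite_subcover _ hopen_tr hKW
  set m : ℕ := t.sup (fun q => q.1.natAbs ⊔ (q.2 0).natAbs ⊔ (q.2 1).natAbs) with hm
  refine ⟨m + 1, Nat.succ_pos m, K, hKcompact, ?_, ?_⟩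
  · -- the unit square is in a bounded connected component of Kᶜ
    refine ⟨0, ?_, ?_⟩
    · apply IsPreconnected.subset_connectedComponentIn KT.unitSquare_preconnected
        KT.zero_mem_unitSquare
      intro y hy
      intro hyK
      have h1 : y ∈ G := by
        rw [hG]; left; exact KT.unitSquare_subset_ball hy
      have : y ∈ K ∩ G := ⟨hyK, h1⟩
      rw [hKG] at this
      exact this
    · -- the component is contained in G
      apply hGbounded.subset
      set C0 := connectedComponentIn Kᶜ (0:Plane) with hC0
      have hC0pre : IsPreconnected C0 := isPreconnected_connectedComponentIn
      have hC0sub : C0 ⊆ Kᶜ := connectedComponentIn_subset _ _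
      have h0G : (0:Plane) ∈ G := by
        rw [hG]; left
        rw [mem_ball, dist_self]; norm_num
      have h0C0 : (0:Plane) ∈ C0 := by
        apply mem_connectedComponentIn
        intro h0K
        have : (0:Plane) ∈ K ∩ G := ⟨h0K, h0G⟩
        rw [hKG] at this
        exact this
      -- C0 ⊆ G ∪ (closure G)ᶜ and the two parts are separated
      have hfr : K = closure G \ G := by rw [hK, hGopen.frontier_eq]
      have hcover : C0 ⊆ G ∪ (closure G)ᶜ := by
        intro y hy
        by_cases hyc : y ∈ closure G
        · left
          by_contra hyG
          apply hC0sub hy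
          rw [hfr]
          exact ⟨hyc, hyG⟩
        · right; exact hyc
      by_contra hC0G
      have hC0ne : (C0 ∩ (closure G)ᶜ).Nonempty := by
        rw [not_subset] at hC0G
        obtain ⟨y, hyC0, hyG⟩ := hC0G
        refine ⟨y, hyC0, ?_⟩
        intro hyc
        apply hC0sub hyC0
        rw [hfr]
        exact ⟨hyc, hyG⟩
      obtain ⟨w', hw'⟩ := hC0pre G (closure G)ᶜ hGopen (isClosed_closure.isOpen_compl)
        hcover ⟨0, h0C0, h0G⟩ hC0ne
      exact hw'.2.2 (subset_closure hw'.2.1)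
  · -- coverage by the Σ(M) union
    intro z hz
    have := ht hz
    rw [mem_iUnion] at this
    obtain ⟨q, hq⟩ := this
    rw [mem_iUnion] at hq
    obtain ⟨hqt, hqz⟩ := hq
    rw [mem_iUnion]
    refine ⟨q, ?_⟩
    rw [mem_iUnion]
    refine ⟨?_, hqz⟩
    -- q ∈ SigmaBox (m+1)
    have hle : q.1.natAbs ⊔ (q.2 0).natAbs ⊔ (q.2 1).natAbs ≤ m :=
      Finset.le_sup (f := fun q : ℤ × IntVec => q.1.natAbs ⊔ (q.2 0).natAbs ⊔ (q.2 1).natAbs) hqt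
    have h1 : q.1.natAbs ≤ m := le_trans (le_trans le_sup_left le_sup_left) hle
    have h2 : (q.2 0).natAbs ≤ m := le_trans (le_trans le_sup_right le_sup_left) hle
    have h3 : (q.2 1).natAbs ≤ m := le_trans le_sup_right hle
    constructor
    · show |q.1| ≤ ((m+1 : ℕ) : ℤ)
      rw [Int.abs_eq_natAbs]
      exact_mod_cast Nat.le_succ_of_le h1
    · show max |q.2 0| |q.2 1| ≤ ((m+1 : ℕ) : ℤ)
      apply max_le
      · rw [Int.abs_eq_natAbs]
        exact_mod_cast Nat.le_succ_of_le h2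
      · rw [Int.abs_eq_natAbs]
        exact_mod_cast Nat.le_succ_of_le h3

end
end

section
/- Let v ∈ ℝ² be a nonzero vector, and let K₁, K₂ be two path-connected subsets of ℝ² such that (K_i + v) ∩ K_i = ∅ for i ∈ {1,2}. Suppose there are integers i ≥ 0 and j > 0 such that (K₁ − i·v) ∩ K₂ ≠ ∅ and (K₁ + j·v) ∩ K₂ ≠ ∅. Then K₁ ∩ K₂ ≠ ∅; moreover, there exists a T_v-translation arc γ whose image is contained in K₁ ∪ K₂ and which joins a point x ∈ K₁ to the point x + v ∈ K₂. -/
noncomputable section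

namespace IBL
open Set

/-- Integer-valued continuous functions on ℝ are constant. -/
lemma intval_const {g : ℝ → ℝ} (hg : Continuous g) (hint : ∀ x, ∃ n : ℤ, g x = n)
    (a b : ℝ) : g a = g b := by
  by_contra hne
  obtain ⟨na, hna⟩ := hint a
  obtain ⟨nb, hnb⟩ := hint b
  have hint' : na ≠ nb := by
    intro h; apply hne; rw [hna, hnb, h]
  rcases le_total na nb with h | h
  · have hlt : na < nb := lt_of_le_of_ne h hint'
    have h2 : (na:ℝ) + 1 ≤ nb := by exact_mod_cast hlt
    have hmem : (na:ℝ) + 1/2 ∈ Set.uIcc (g a) (g b) := by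
      rw [Set.mem_uIcc, hna, hnb]; left; constructor <;> linarith
    obtain ⟨t, _, ht⟩ := intermediate_value_uIcc (f := g) (a := a) (b := b) hg.continuousOn hmem
    obtain ⟨n, hn⟩ := hint t
    rw [hn] at ht
    have h3 : (2*n : ℝ) = 2*na + 1 := by linarith
    have h4 : (2*n : ℤ) = 2*na + 1 := by exact_mod_cast h3
    omega
  · have hlt : nb < na := lt_of_le_of_ne h (Ne.symm hint')
    have h2 : (nb:ℝ) + 1 ≤ na := by exact_mod_cast hlt
    have hmem : (nb:ℝ) + 1/2 ∈ Set.uIcc (g a) (g b) := by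
      rw [Set.mem_uIcc, hna, hnb]; right; constructor <;> linarith
    obtain ⟨t, _, ht⟩ := intermediate_value_uIcc (f := g) (a := a) (b := b) hg.continuousOn hmem
    obtain ⟨n, hn⟩ := hint t
    rw [hn] at ht
    have h3 : (2*n : ℝ) = 2*nb + 1 := by linarith
    have h4 : (2*n : ℤ) = 2*nb + 1 := by exact_mod_cast h3
    omega

/-- A continuous function with exp ∘ u = 1 is constant. -/
lemma exp_one_const {u : ℝ → ℂ} (hu : Continuous u) (h1 : ∀ x, Complex.exp (u x) = 1)
    (a b : ℝ) : u a = u b := by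
  have h2 : (2*(Real.pi:ℂ)*Complex.I) ≠ 0 := by
    simp [Real.pi_ne_zero, Complex.I_ne_zero]
  have key : ∀ x, u x = ((u x / (2*Real.pi*Complex.I)).re : ℝ) * (2*Real.pi*Complex.I) := by
    intro x
    obtain ⟨n, hn⟩ := Complex.exp_eq_one_iff.mp (h1 x)
    rw [hn, mul_div_assoc, div_self h2]
    simp
  have hcont : Continuous fun x => (u x / (2*Real.pi*Complex.I)).re :=
    Complex.continuous_re.comp (hu.div_const _)
  have hint : ∀ x, ∃ n : ℤ, (u x / (2*Real.pi*Complex.I)).re = n := by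
    intro x
    obtain ⟨n, hn⟩ := Complex.exp_eq_one_iff.mp (h1 x)
    refine ⟨n, ?_⟩
    rw [hn, mul_div_assoc, div_self h2]
    simp
  have := intval_const hcont hint a b
  rw [key a, key b, this]

/-- clamp to [0,1] -/
def clmp (x : ℝ) : ℝ := max (min x 1) 0

lemma clmp_mem (x : ℝ) : clmp x ∈ Icc (0:ℝ) 1 := by
  refine ⟨le_max_right _ _, ?_⟩
  rw [clmp, max_le_iff]
  exact ⟨min_le_right _ _, by norm_num⟩

lemma clmp_of_mem {x : ℝ} (h : x ∈ Icc (0:ℝ) 1) : clmp x = x := by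
  rw [clmp, min_eq_left h.2, max_eq_left h.1]

lemma clmp_zero : clmp 0 = 0 := clmp_of_mem (by norm_num)
lemma clmp_one : clmp 1 = 1 := clmp_of_mem (by norm_num)

lemma clmp_idem (x : ℝ) : clmp (clmp x) = clmp x := clmp_of_mem (clmp_mem x)

lemma clmp_continuous : Continuous clmp :=
  (continuous_id.min continuous_const).max continuous_const

lemma clmp_lip (x y : ℝ) : |clmp x - clmp y| ≤ |x - y| := by
  refine le_trans (abs_max_sub_max_le_abs _ _ _) ?_
  refine le_trans (abs_min_sub_min_le_max x 1 y 1) ?_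
  simp

lemma clmp_min_one (s : ℝ) : clmp (min s 1) = clmp s := by
  rw [clmp, clmp, min_assoc, min_self]

/-- ball criterion for slitPlane -/
lemma mem_slit_of_ball {z : ℂ} (h : ‖z - 1‖ ≤ 1) (hz : z ≠ 0) :
    z ∈ Complex.slitPlane := by
  rw [Complex.mem_slitPlane_iff]
  by_contra hcon
  push_neg at hcon
  obtain ⟨hre, him⟩ := hcon
  have h2 : (z.re - 1)^2 + z.im^2 ≤ 1 := by
    have habs : (‖z-1‖)^2 ≤ 1 := by nlinarith [norm_nonneg (z-1)]
    rw [Complex.sq_norm, Complex.normSq_apply, Complex.sub_re, Complex.sub_im] at habs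
    simp only [Complex.one_re, Complex.one_im, sub_zero] at habs
    nlinarith
  rw [him] at h2
  have hre0 : z.re = 0 := by nlinarith
  exact hz (Complex.ext hre0 him)

/-- uIcc helpers -/
lemma abs_le_of_uIcc {p q z : ℝ} (h : z ∈ Set.uIcc p q) : |z - p| ≤ |q - p| := by
  rcases le_total p q with h' | h'
  · rw [Set.uIcc_of_le h'] at h
    rw [_root_.abs_of_nonneg (by linarith [h.1] : (0:ℝ) ≤ z - p),
      _root_.abs_of_nonneg (by linarith : (0:ℝ) ≤ q - p)]
    linarith [h.2]
  · rw [Set.uIcc_of_ge h'] at h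
    rw [abs_of_nonpos (by linarith [h.2] : z - p ≤ 0), abs_of_nonpos (by linarith : q - p ≤ 0)]
    linarith [h.1]

lemma eq_of_abs_uIcc {p q z : ℝ} (h : z ∈ Set.uIcc p q) (he : |z - p| = |q - p|) : z = q := by
  rcases le_total p q with h' | h'
  · rw [Set.uIcc_of_le h'] at h
    rw [_root_.abs_of_nonneg (by linarith [h.1] : (0:ℝ) ≤ z - p),
      _root_.abs_of_nonneg (by linarith : (0:ℝ) ≤ q - p)] at he
    linarith
  · rw [Set.uIcc_of_ge h'] at h
    rw [abs_of_nonpos (by linarith [h.2] : z - p ≤ 0),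
      abs_of_nonpos (by linarith : q - p ≤ 0)] at he
    linarith

lemma aff_mem_uIcc {a b c : ℝ} (h : c ∈ Icc (0:ℝ) 1) : a + c*(b - a) ∈ Set.uIcc a b := by
  rcases le_total a b with h' | h'
  · rw [Set.uIcc_of_le h']
    constructor <;> nlinarith [h.1, h.2]
  · rw [Set.uIcc_of_ge h']
    constructor <;> nlinarith [h.1, h.2]

lemma uIcc_sub_Icc {p q : ℝ} (hp : p ∈ Icc (0:ℝ) 1) (hq : q ∈ Icc (0:ℝ) 1) :
    Set.uIcc p q ⊆ Icc (0:ℝ) 1 := by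
  intro z hz
  rw [Set.mem_uIcc] at hz
  rcases hz with ⟨h1, h2⟩ | ⟨h1, h2⟩
  · exact ⟨le_trans hp.1 h1, le_trans h2 hq.2⟩
  · exact ⟨le_trans hq.1 h1, le_trans h2 hp.2⟩


lemma clmp_of_nonpos {x : ℝ} (h : x ≤ 0) : clmp x = 0 := by
  rw [clmp, max_eq_right]
  exact le_trans (min_le_left _ _) h

/-- 2D lifting of a nonvanishing clamped map through exp. -/
lemma lift2 (F : ℝ × ℝ → ℂ) (hF : Continuous F) (h0 : ∀ z, F z ≠ 0)
    (hcl : ∀ s t : ℝ, F (s, t) = F (clmp s, clmp t)) :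
    ∃ G : ℝ × ℝ → ℂ, Continuous G ∧ ∀ z, Complex.exp (G z) = F z := by
  -- a uniform lower bound on |F|
  have hK : IsCompact ((Icc (0:ℝ) 1) ×ˢ (Icc (0:ℝ) 1)) := isCompact_Icc.prod isCompact_Icc
  obtain ⟨z₀, hz₀K, hz₀m⟩ := hK.exists_isMinOn ⟨((0:ℝ),(0:ℝ)), by constructor <;> norm_num⟩
    ((continuous_norm.comp hF).continuousOn)
  have hz₀ := isMinOn_iff.mp hz₀m
  set ε : ℝ := ‖F z₀‖ with hε
  have hεpos : 0 < ε := by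
    rw [hε]; exact (norm_pos_iff).mpr (h0 z₀)
  have hlow : ∀ w : ℝ × ℝ, ε ≤ ‖F w‖ := by
    intro w
    have : F w = F (clmp w.1, clmp w.2) := hcl w.1 w.2
    rw [this]
    exact hz₀ (clmp w.1, clmp w.2) ⟨clmp_mem _, clmp_mem _⟩
  -- uniform continuity
  have hucF : UniformContinuous F := by
    haveI : CompactSpace (↥((Icc (0:ℝ) 1) ×ˢ (Icc (0:ℝ) 1))) :=
      isCompact_iff_compactSpace.mp hK
    have h1 : UniformContinuous (fun p : ↥((Icc (0:ℝ) 1) ×ˢ (Icc (0:ℝ) 1)) => F p.val) :=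
      CompactSpace.uniformContinuous_of_continuous (hF.comp continuous_subtype_val)
    have h2 : UniformContinuous (fun z : ℝ × ℝ =>
        (⟨(clmp z.1, clmp z.2), ⟨clmp_mem _, clmp_mem _⟩⟩ :
          ↥((Icc (0:ℝ) 1) ×ˢ (Icc (0:ℝ) 1)))) := by
      refine UniformContinuous.subtype_mk ?_ _
      rw [Metric.uniformContinuous_iff]
      intro δ hδ
      refine ⟨δ, hδ, ?_⟩
      intro a b hab
      calc dist ((clmp a.1, clmp a.2) : ℝ × ℝ) ((clmp b.1, clmp b.2) : ℝ × ℝ)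
          = |clmp a.1 - clmp b.1| ⊔ |clmp a.2 - clmp b.2| := by
            rw [Prod.dist_eq, Real.dist_eq, Real.dist_eq]
        _ ≤ |a.1 - b.1| ⊔ |a.2 - b.2| := max_le_max (clmp_lip _ _) (clmp_lip _ _)
        _ < δ := by rw [Prod.dist_eq, Real.dist_eq, Real.dist_eq] at hab; exact hab
    have : F = (fun p : ↥((Icc (0:ℝ) 1) ×ˢ (Icc (0:ℝ) 1)) => F p.val) ∘
        (fun z : ℝ × ℝ => (⟨(clmp z.1, clmp z.2), ⟨clmp_mem _, clmp_mem _⟩⟩ :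
          ↥((Icc (0:ℝ) 1) ×ˢ (Icc (0:ℝ) 1)))) := by
      funext z
      exact hcl z.1 z.2
    rw [this]
    exact h1.comp h2
  obtain ⟨δ, hδpos, hδ⟩ := Metric.uniformContinuous_iff.mp hucF ε hεpos
  obtain ⟨n, hn⟩ := exists_nat_one_div_lt hδpos
  set h : ℝ := 1/((n:ℝ)+1) with hh
  have hhpos : 0 < h := by rw [hh]; positivity
  have hhδ : h < δ := hn
  -- key ratio fact
  have key : ∀ z w : ℝ × ℝ, dist z w ≤ h →
      F z / F w ∈ Complex.slitPlane ∧ F z / F w ≠ 0 := by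
    intro z w hzw
    have hne : F z / F w ≠ 0 := div_ne_zero (h0 z) (h0 w)
    refine ⟨?_, hne⟩
    apply mem_slit_of_ball _ hne
    have : F z / F w - 1 = (F z - F w) / F w := div_sub_one (h0 w)
    rw [this, norm_div]
    rw [div_le_one (lt_of_lt_of_le hεpos (hlow w))]
    calc ‖F z - F w‖ = dist (F z) (F w) := by rw [Complex.dist_eq]
    _ ≤ ε := le_of_lt (hδ (lt_of_le_of_lt hzw hhδ))
    _ ≤ ‖F w‖ := hlow w
  -- bottom edge lift
  have bind : ∀ i : ℕ, ∃ g : ℝ → ℂ, Continuous g ∧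
      ∀ s : ℝ, s ≤ (i:ℝ)*h → Complex.exp (g s) = F (s, 0) := by
    intro i
    induction i with
    | zero =>
      refine ⟨fun _ => Complex.log (F (0, 0)), continuous_const, ?_⟩
      intro s hs
      have hs0 : s ≤ 0 := by simpa using hs
      rw [Complex.exp_log (h0 _)]
      rw [hcl s 0, clmp_of_nonpos hs0, clmp_zero]
    | succ i ih =>
      obtain ⟨g, hgc, hg⟩ := ih
      set ci : ℝ := (i:ℝ)*h with hci
      set px : ℝ → ℝ := fun s => max ci (min s (ci + h)) with hpx
      have hpxm : ∀ s, px s ∈ Icc ci (ci + h) := by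
        intro s
        exact ⟨le_max_left _ _, max_le (by linarith) (min_le_right _ _)⟩
      have hpxd : ∀ s : ℝ, dist ((px s, (0:ℝ)) : ℝ × ℝ) ((ci, (0:ℝ))) ≤ h := by
        intro s
        rw [Prod.dist_eq, Real.dist_eq, Real.dist_eq]
        simp only [sub_self, abs_zero]
        rw [max_eq_left (abs_nonneg _)]
        rw [_root_.abs_of_nonneg (by linarith [(hpxm s).1] : (0:ℝ) ≤ px s - ci)]
        linarith [(hpxm s).2]
      set rat : ℝ → ℂ := fun s => F (px s, 0) / F (ci, 0) with hrat
      have hratc : Continuous rat := by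
        apply Continuous.div_const
        exact hF.comp ((continuous_const.max (continuous_id.min continuous_const)).prodMk
          continuous_const)
      have hratkey : ∀ s, rat s ∈ Complex.slitPlane ∧ rat s ≠ 0 := fun s =>
        key _ _ (hpxd s)
      have hlogc : Continuous fun s => Complex.log (rat s) := by
        rw [continuous_iff_continuousAt]
        intro s
        exact (hratc.continuousAt).clog (hratkey s).1
      refine ⟨fun s => if s ≤ ci then g s else g ci + Complex.log (rat s),
        ?_, ?_⟩
      · refine Continuous.if_le hgc (continuous_const.add hlogc) continuous_id
          continuous_const ?_
        intro s hs
        have hps : px s = ci := by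
          rw [hpx]
          simp only
          rw [hs, min_eq_left (by linarith), max_eq_left (le_refl _)]
        have : rat s = 1 := by
          rw [hrat]; simp only
          rw [hps, div_self (h0 _)]
        rw [this, Complex.log_one, add_zero, hs]
      · intro s hs
        by_cases hsc : s ≤ ci
        · simp only [if_pos hsc]; exact hg s hsc
        · simp only [if_neg hsc]
          push_neg at hsc
          have hs' : s ≤ ci + h := by
            have : ((i:ℕ)+1 : ℝ)*h = ci + h := by rw [hci]; ring
            rw [← this]
            exact_mod_cast hs
          have hpxs : px s = s := by
            rw [hpx]
            simp only
            rw [min_eq_left hs', max_eq_right (le_of_lt hsc)]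
          rw [Complex.exp_add, Complex.exp_log (hratkey s).2, hg ci (le_refl _),
            hrat]
          simp only
          rw [hpxs, mul_comm, div_mul_cancel₀ _ (h0 _)]
  obtain ⟨bot0, hbot0c, hbot0⟩ := bind (n+1)
  have hNh : ((n:ℝ)+1)*h = 1 := by
    rw [hh]; field_simp
  set bot : ℝ → ℂ := fun s => bot0 (min s 1) with hbot
  have hbotc : Continuous bot := hbot0c.comp (continuous_id.min continuous_const)
  have hbote : ∀ s : ℝ, Complex.exp (bot s) = F (s, 0) := by
    intro s
    have h1 : min s 1 ≤ ((n+1:ℕ):ℝ)*h := by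
      push_cast
      rw [hNh]
      exact min_le_right _ _
    rw [hbot]
    simp only
    rw [hbot0 _ h1]
    rw [hcl (min s 1) 0, clmp_min_one, ← hcl s 0]
  -- strips
  have sind : ∀ j : ℕ, ∃ G : ℝ × ℝ → ℂ, Continuous G ∧
      ∀ z : ℝ × ℝ, z.2 ≤ (j:ℝ)*h → Complex.exp (G z) = F z := by
    intro j
    induction j with
    | zero =>
      refine ⟨fun z => bot z.1, hbotc.comp continuous_fst, ?_⟩
      intro z hz
      have hz0 : z.2 ≤ 0 := by simpa using hz
      rw [hbote z.1]
      rw [hcl z.1 0, clmp_zero, hcl z.1 z.2, clmp_of_nonpos hz0]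
    | succ j ih =>
      obtain ⟨G, hGc, hG⟩ := ih
      set cj : ℝ := (j:ℝ)*h with hcj
      set py : ℝ → ℝ := fun t => max cj (min t (cj + h)) with hpy
      have hpym : ∀ t, py t ∈ Icc cj (cj + h) := by
        intro t
        exact ⟨le_max_left _ _, max_le (by linarith) (min_le_right _ _)⟩
      have hpyd : ∀ z : ℝ × ℝ, dist ((z.1, py z.2) : ℝ × ℝ) ((z.1, cj)) ≤ h := by
        intro z
        rw [Prod.dist_eq, Real.dist_eq, Real.dist_eq]
        simp only [sub_self, abs_zero]
        rw [max_eq_right (abs_nonneg _)]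
        rw [_root_.abs_of_nonneg (by linarith [(hpym z.2).1] : (0:ℝ) ≤ py z.2 - cj)]
        linarith [(hpym z.2).2]
      set rat : ℝ × ℝ → ℂ := fun z => F (z.1, py z.2) / F (z.1, cj) with hrat
      have hratc : Continuous rat := by
        apply Continuous.div
        · exact hF.comp (continuous_fst.prodMk
            (continuous_const.max ((continuous_snd).min continuous_const)))
        · exact hF.comp (continuous_fst.prodMk continuous_const)
        · intro z; exact h0 _
      have hratkey : ∀ z, rat z ∈ Complex.slitPlane ∧ rat z ≠ 0 := fun z =>
        key _ _ (hpyd z)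
      have hlogc : Continuous fun z => Complex.log (rat z) := by
        rw [continuous_iff_continuousAt]
        intro z
        exact (hratc.continuousAt).clog (hratkey z).1
      refine ⟨fun z => if z.2 ≤ cj then G z else G (z.1, cj) + Complex.log (rat z), ?_, ?_⟩
      · refine Continuous.if_le hGc
          ((hGc.comp (continuous_fst.prodMk continuous_const)).add hlogc)
          continuous_snd continuous_const ?_
        intro z hz
        have hps : py z.2 = cj := by
          rw [hpy]
          simp only
          rw [hz, min_eq_left (by linarith), max_eq_left (le_refl _)]
        have h1 : rat z = 1 := by
          rw [hrat]; simp only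
          rw [hps, div_self (h0 _)]
        rw [h1, Complex.log_one, add_zero]
        congr 1
        rw [← hz]
      · intro z hz
        by_cases hzc : z.2 ≤ cj
        · simp only [if_pos hzc]; exact hG z hzc
        · simp only [if_neg hzc]
          push_neg at hzc
          have hz' : z.2 ≤ cj + h := by
            have he : ((j:ℕ)+1 : ℝ)*h = cj + h := by rw [hcj]; ring
            rw [← he]
            exact_mod_cast hz
          have hpys : py z.2 = z.2 := by
            rw [hpy]
            simp only
            rw [min_eq_left hz', max_eq_right (le_of_lt hzc)]
          rw [Complex.exp_add, Complex.exp_log (hratkey z).2,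
            hG (z.1, cj) (le_refl _), hrat]
          simp only
          rw [hpys, mul_comm, div_mul_cancel₀ _ (h0 _)]
  obtain ⟨G0, hG0c, hG0⟩ := sind (n+1)
  refine ⟨fun z => G0 (z.1, min z.2 1), hG0c.comp (continuous_fst.prodMk
    (continuous_snd.min continuous_const)), ?_⟩
  intro z
  have h1 : ((z.1, min z.2 1) : ℝ × ℝ).2 ≤ ((n+1:ℕ):ℝ)*h := by
    push_cast
    rw [hNh]
    exact min_le_right _ _
  rw [hG0 _ h1]
  show F (z.1, min z.2 1) = F z
  rw [hcl z.1 (min z.2 1), clmp_min_one, ← hcl z.1 z.2]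


/-- ℝ² → ℂ coordinate map -/
def Cf (z : EuclideanSpace ℝ (Fin 2)) : ℂ := (z 0 : ℝ) + (z 1 : ℝ) * Complex.I

lemma Cf_add (x y : EuclideanSpace ℝ (Fin 2)) : Cf (x + y) = Cf x + Cf y := by
  simp only [Cf, PiLp.add_apply]
  push_cast
  ring

lemma Cf_sub (x y : EuclideanSpace ℝ (Fin 2)) : Cf (x - y) = Cf x - Cf y := by
  simp only [Cf, PiLp.sub_apply]
  push_cast
  ring

lemma Cf_smul (c : ℝ) (x : EuclideanSpace ℝ (Fin 2)) : Cf (c • x) = (c:ℂ) * Cf x := by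
  simp only [Cf, PiLp.smul_apply, smul_eq_mul]
  push_cast
  ring

lemma Cf_inj {x y : EuclideanSpace ℝ (Fin 2)} (h : Cf x = Cf y) : x = y := by
  have hre := congrArg Complex.re h
  have him := congrArg Complex.im h
  simp only [Cf, Complex.add_re, Complex.ofReal_re, Complex.mul_re, Complex.ofReal_im,
    Complex.I_re, Complex.I_im, Complex.add_im, Complex.mul_im] at hre him
  norm_num at hre him
  ext i
  fin_cases i
  · exact hre
  · exact him

lemma Cf_cont : Continuous Cf := by
  apply Continuous.add
  · exact Complex.continuous_ofReal.comp (EuclideanSpace.proj (0 : Fin 2)).continuous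
  · exact (Complex.continuous_ofReal.comp
      (EuclideanSpace.proj (1 : Fin 2)).continuous).mul continuous_const

lemma Cf_zero_iff {x : EuclideanSpace ℝ (Fin 2)} : Cf x = 0 ↔ x = 0 := by
  constructor
  · intro h
    apply Cf_inj
    rw [h]
    simp [Cf]
  · intro h
    rw [h]
    simp [Cf]

/-- the set of nonzero integer multiples of v is closed -/
lemma Zclosed (v : EuclideanSpace ℝ (Fin 2)) (hv : v ≠ 0) :
    IsClosed {d : EuclideanSpace ℝ (Fin 2) | ∃ n : ℤ, n ≠ 0 ∧ d = (n:ℝ) • v} := by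
  have hvC : Cf v ≠ 0 := fun h => hv (Cf_zero_iff.mp h)
  have hset : {d : EuclideanSpace ℝ (Fin 2) | ∃ n : ℤ, n ≠ 0 ∧ d = (n:ℝ) • v} =
      ((fun d => Cf d / Cf v) ⁻¹' (Set.range ((↑·) : ℤ → ℂ))) ∩ {d | ‖v‖ ≤ ‖d‖} := by
    ext d
    constructor
    · rintro ⟨n, hn, rfl⟩
      constructor
      · refine ⟨n, ?_⟩
        show (n:ℂ) = Cf ((n:ℝ) • v) / Cf v
        rw [Cf_smul, mul_div_assoc, div_self hvC, mul_one]
        norm_cast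
      · show ‖v‖ ≤ ‖(n:ℝ) • v‖
        rw [norm_smul]
        have : (1:ℝ) ≤ |(n:ℝ)| := by
          rw [← Int.cast_abs]
          exact_mod_cast Int.one_le_abs hn
        simp only [Real.norm_eq_abs]
        nlinarith [norm_nonneg v]
    · rintro ⟨⟨n, hn⟩, hnorm⟩
      have hd : d = (n:ℝ) • v := by
        apply Cf_inj
        rw [Cf_smul]
        field_simp at hn
        rw [← hn]
        field_simp
        norm_cast
      refine ⟨n, ?_, hd⟩
      rintro rfl
      rw [hd] at hnorm
      simp at hnorm
      exact hv hnorm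
  rw [hset]
  apply IsClosed.inter
  · exact Complex.isClosed_range_intCast.preimage (Cf_cont.div_const _)
  · exact isClosed_le continuous_const continuous_norm

/-- The core winding-number contradiction. -/
lemma lemW (v : EuclideanSpace ℝ (Fin 2)) (hv : v ≠ 0)
    (τ : ℝ → EuclideanSpace ℝ (Fin 2)) (hτ : Continuous τ)
    (k : ℤ) (hk : 2 ≤ k) (hend : τ 1 = τ 0 + (k:ℝ) • v)
    (hclean : ∀ s ∈ Icc (0:ℝ) 1, ∀ t ∈ Icc (0:ℝ) 1, ∀ m : ℤ, m ≠ 0 →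
      τ t = τ s + (m:ℝ) • v → (s = 0 ∧ t = 1) ∨ (s = 1 ∧ t = 0)) : False := by
  have hπI : (2*(Real.pi:ℂ)*Complex.I) ≠ 0 := by
    simp [Real.pi_ne_zero, Complex.I_ne_zero]
  have hkC : ((k:ℤ):ℂ) ≠ 0 := by
    simp only [ne_eq, Int.cast_eq_zero]
    omega
  have hvC : Cf v ≠ 0 := fun h => hv (Cf_zero_iff.mp h)
  have hkunit : ¬ IsUnit (k:ℤ) := by
    rw [Int.isUnit_iff]
    omega
  have hcancel : ∀ (x : EuclideanSpace ℝ (Fin 2)) (c : ℝ), x = x + c • v → c = 0 := by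
    intro x c h
    have h2 : c • v = 0 := by
      have h3 := h.symm
      rwa [add_eq_left] at h3
    rcases smul_eq_zero.mp h2 with h3 | h3
    · exact h3
    · exact absurd h3 hv
  set c₀ : ℂ := (2*(Real.pi:ℂ)*Complex.I) / ((k:ℂ) * Cf v) with hc₀def
  have hc₀ne : c₀ ≠ 0 := div_ne_zero hπI (mul_ne_zero hkC hvC)
  have hc₀v : c₀ * ((k:ℂ) * Cf v) = 2*(Real.pi:ℂ)*Complex.I := by
    rw [hc₀def]
    field_simp
  set L : EuclideanSpace ℝ (Fin 2) → ℂ := fun z => c₀ * Cf z with hLdef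
  set E : EuclideanSpace ℝ (Fin 2) → ℂ := fun z => Complex.exp (L z) with hEdef
  have hEdiff : ∀ x y : EuclideanSpace ℝ (Fin 2), E x = E y →
      ∃ nn : ℤ, x = y + ((nn*k : ℤ):ℝ) • v := by
    intro x y h
    obtain ⟨nn, hnn⟩ := Complex.exp_eq_exp_iff_exists_int.mp h
    refine ⟨nn, Cf_inj ?_⟩
    rw [Cf_add, Cf_smul]
    have h2 : L x = L y + (nn:ℂ) * (c₀ * ((k:ℂ) * Cf v)) := by
      rw [hc₀v]; linear_combination hnn
    rw [hLdef] at h2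
    simp only at h2
    have h3 : Cf x = Cf y + (nn:ℂ) * ((k:ℂ) * Cf v) := by
      apply mul_left_cancel₀ hc₀ne
      rw [h2]; ring
    rw [h3]
    push_cast
    ring
  set τp : ℝ → EuclideanSpace ℝ (Fin 2) := fun s => τ (clmp s) with hτpdef
  have hτpc : Continuous τp := hτ.comp clmp_continuous
  set ω : ℝ → ℂ := fun s => E (τp s) with hωdef
  have hωc : Continuous ω := (Complex.continuous_exp.comp (continuous_const.mul Cf_cont)).comp hτpc
  have hωclmp : ∀ s, ω (clmp s) = ω s := by
    intro s
    rw [hωdef]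
    simp only
    rw [hτpdef]
    simp only
    rw [clmp_idem]
  have hωne : ∀ s, ω s ≠ 0 := fun s => Complex.exp_ne_zero _
  have hEadd : ∀ (x : EuclideanSpace ℝ (Fin 2)) (m : ℤ),
      E (x + (m:ℝ) • v) = E x * Complex.exp ((m:ℂ) * ((2*(Real.pi:ℂ)*Complex.I) / (k:ℂ))) := by
    intro x m
    rw [hEdef]
    simp only
    rw [hLdef]
    simp only
    rw [Cf_add, Cf_smul, ← Complex.exp_add]
    congr 1
    have hd : c₀ * Cf v = (2*(Real.pi:ℂ)*Complex.I) / (k:ℂ) := by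
      rw [eq_div_iff hkC]
      linear_combination hc₀v
    rw [← hd]
    push_cast
    ring
  have hτp1 : τp 1 = τ 1 := by rw [hτpdef]; simp only; rw [clmp_one]
  have hτp0 : τp 0 = τ 0 := by rw [hτpdef]; simp only; rw [clmp_zero]
  have hω10 : ω 1 = ω 0 := by
    rw [hωdef]
    simp only
    rw [hτp1, hτp0, hend, hEadd (τ 0) k]
    have hd : ((k:ℤ):ℂ) * ((2*(Real.pi:ℂ)*Complex.I) / ((k:ℤ):ℂ)) = 2*(Real.pi:ℂ)*Complex.I := by
      field_simp
    rw [hd, Complex.exp_two_pi_mul_I, mul_one]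
  set ζ : ℂ := Complex.exp ((2*(Real.pi:ℂ)*Complex.I) / (k:ℂ)) with hζdef
  have hζabs : ‖ζ‖ = 1 := by
    rw [hζdef, Complex.norm_exp]
    have hre : ((2*(Real.pi:ℂ)*Complex.I) / (k:ℂ)).re = 0 := by
      have hh : (2*(Real.pi:ℂ)*Complex.I) / (k:ℂ) = ((2*Real.pi/(k:ℝ) : ℝ):ℂ) * Complex.I := by
        push_cast
        field_simp
      rw [hh]
      simp
    rw [hre, Real.exp_zero]
  have hζne0 : ζ ≠ 0 := Complex.exp_ne_zero _
  have hζne1 : (1:ℂ) - ζ ≠ 0 := by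
    rw [sub_ne_zero]
    intro h
    obtain ⟨nn, hnn⟩ := Complex.exp_eq_one_iff.mp (by rw [← hζdef]; exact h.symm)
    rw [div_eq_iff hkC] at hnn
    have h3 : ((nn * k : ℤ):ℂ) = 1 := by
      apply mul_right_cancel₀ hπI
      push_cast
      linear_combination -hnn
    have h4 : (nn * k : ℤ) = 1 := by exact_mod_cast h3
    exact hkunit (IsUnit.of_mul_eq_one nn (by linarith [h4] : k * nn = 1))
  have hmeet : ∀ s t : ℝ, ω s ≠ ζ * ω t := by
    intro s t h
    have hEv : ζ * ω t = E (τp t + ((1:ℤ):ℝ) • v) := by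
      rw [hEadd (τp t) 1]
      push_cast
      rw [one_mul, hζdef, hωdef]
      ring
    rw [hEv] at h
    obtain ⟨nn, hnn⟩ := hEdiff _ _ h
    have hsum : τp s = τp t + ((1 + nn*k : ℤ):ℝ) • v := by
      rw [hnn]
      push_cast
      rw [add_smul, one_smul]
      abel
    have hm0 : (1 + nn*k : ℤ) ≠ 0 := by
      intro h0
      have h1 : k * (-nn) = 1 := by linear_combination -h0
      exact hkunit (IsUnit.of_mul_eq_one (-nn) h1)
    have hcl := hclean (clmp t) (clmp_mem t) (clmp s) (clmp_mem s) _ hm0 hsum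
    rw [hτpdef] at hsum
    simp only at hsum
    rcases hcl with ⟨ht0, hs1⟩ | ⟨ht1, hs0⟩
    · rw [ht0, hs1, hend] at hsum
      have h9 : ((k:ℝ)) • v = ((1 + nn*k : ℤ):ℝ) • v := add_left_cancel hsum
      have h5 : (((1 + nn*k : ℤ):ℝ) - (k:ℝ)) • v = 0 := by
        rw [sub_smul, ← h9, sub_self]
      rcases smul_eq_zero.mp h5 with h6 | h6
      · have h7 : (1 + nn*k : ℤ) = k := by
          have h10 : ((1 + nn*k : ℤ):ℝ) = ((k:ℤ):ℝ) := by
            push_cast at h6 ⊢; linarith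
          exact_mod_cast h10
        have h8 : k * (1 - nn) = 1 := by linear_combination -h7
        exact hkunit (IsUnit.of_mul_eq_one (1-nn) h8)
      · exact hv h6
    · rw [ht1, hs0, hend] at hsum
      have h9 : (k:ℝ) • v + ((1 + nn*k : ℤ):ℝ) • v = 0 := by
        have h10 := hsum.symm
        rw [add_assoc] at h10
        rwa [add_eq_left] at h10
      have h5 : ((k:ℝ) + ((1 + nn*k : ℤ):ℝ)) • v = 0 := by
        rw [add_smul]; exact h9
      rcases smul_eq_zero.mp h5 with h6 | h6
      · have h7 : (k + (1 + nn*k) : ℤ) = 0 := by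
          have h10 : ((k + (1 + nn*k) : ℤ):ℝ) = 0 := by push_cast at h6 ⊢; linarith
          exact_mod_cast h10
        have h8 : k * (-1 - nn) = 1 := by linear_combination -h7
        exact hkunit (IsUnit.of_mul_eq_one (-1-nn) h8)
      · exact hv h6
  -- the doubly periodic nonvanishing map
  set H : ℝ × ℝ → ℂ := fun z => ω z.1 - ζ * ω z.2 with hHdef
  have hHc : Continuous H := (hωc.comp continuous_fst).sub
    (continuous_const.mul (hωc.comp continuous_snd))
  have hH0 : ∀ z, H z ≠ 0 := by
    intro z
    rw [hHdef]
    simp only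
    rw [sub_ne_zero]
    exact hmeet z.1 z.2
  have hHcl : ∀ s t : ℝ, H (s, t) = H (clmp s, clmp t) := by
    intro s t
    rw [hHdef]
    simp only
    rw [hωclmp, hωclmp]
  obtain ⟨G, hGc, hG⟩ := lift2 H hHc hH0 hHcl
  -- maximum of |ω|
  obtain ⟨sm, hsmI, hsmm⟩ := (isCompact_Icc (a := (0:ℝ)) (b := 1)).exists_isMaxOn
    ⟨0, Set.mem_Icc.mpr ⟨le_refl _, by norm_num⟩⟩
    ((continuous_norm.comp hωc).continuousOn)
  have hsm := isMaxOn_iff.mp hsmm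
  have hmax : ∀ s : ℝ, ‖ω s‖ ≤ ‖ω sm‖ := by
    intro s
    rw [← hωclmp s]
    exact hsm (clmp s) (clmp_mem s)
  have hRpos : 0 < ‖ω sm‖ := norm_pos_iff.mpr (hωne sm)
  -- row and column periods
  have hpconst : ∀ a b : ℝ, (G (1, a) - G (0, a)) = (G (1, b) - G (0, b)) := by
    apply exp_one_const
    · exact (hGc.comp (continuous_const.prodMk continuous_id)).sub
        (hGc.comp (continuous_const.prodMk continuous_id))
    · intro t
      rw [Complex.exp_sub, hG, hG]
      have : H (1, t) = H (0, t) := by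
        rw [hHdef]
        simp only
        rw [hω10]
      rw [this, div_self (hH0 _)]
  have hqconst : ∀ a b : ℝ, (G (a, 1) - G (a, 0)) = (G (b, 1) - G (b, 0)) := by
    apply exp_one_const
    · exact (hGc.comp (continuous_id.prodMk continuous_const)).sub
        (hGc.comp (continuous_id.prodMk continuous_const))
    · intro s
      rw [Complex.exp_sub, hG, hG]
      have : H (s, 1) = H (s, 0) := by
        rw [hHdef]
        simp only
        rw [hω10]
      rw [this, div_self (hH0 _)]
  -- total period via the diagonal
  have htot : G (1, 1) - G (0, 0) = 2*(Real.pi:ℂ)*Complex.I := by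
    have hdiag : ∀ a b : ℝ,
        (G (a, a) - (Complex.log (1 - ζ) + L (τp a))) =
        (G (b, b) - (Complex.log (1 - ζ) + L (τp b))) := by
      apply exp_one_const
      · refine Continuous.sub (hGc.comp (continuous_id.prodMk continuous_id)) ?_
        exact continuous_const.add (continuous_const.mul (Cf_cont.comp hτpc))
      · intro s
        rw [Complex.exp_sub, hG, Complex.exp_add, Complex.exp_log hζne1]
        have h1 : H (s, s) = (1 - ζ) * ω s := by
          rw [hHdef]
          simp only
          ring
        have h2 : Complex.exp (L (τp s)) = ω s := rfl
        rw [h1, h2, div_self (mul_ne_zero hζne1 (hωne s))]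
    have h3 := hdiag 1 0
    have h4 : G (1,1) - G (0,0) = L (τp 1) - L (τp 0) := by linear_combination h3
    rw [h4, hτp1, hτp0, hend, hLdef]
    simp only
    rw [Cf_add, Cf_smul]
    push_cast
    rw [← hc₀v]
    ring
  -- pfun sm = 0
  have hp0 : G (1, sm) - G (0, sm) = 0 := by
    set C : ℂ := ζ * ω sm with hCdef
    have hCne : C ≠ 0 := mul_ne_zero hζne0 (hωne sm)
    have hCabs : ‖C‖ = ‖ω sm‖ := by
      rw [hCdef, norm_mul, hζabs, one_mul]
    have hinner_ne : ∀ s : ℝ, (1:ℂ) - ω s / C ≠ 0 := by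
      intro s h
      have h1 : ω s / C = 1 := by linear_combination -h
      exact hmeet s sm (by rw [← hCdef]; exact eq_of_div_eq_one h1)
    have hinner_slit : ∀ s : ℝ, (1:ℂ) - ω s / C ∈ Complex.slitPlane := by
      intro s
      apply mem_slit_of_ball _ (hinner_ne s)
      have h1 : (1:ℂ) - ω s / C - 1 = -(ω s / C) := by ring
      rw [h1, norm_neg, norm_div, hCabs]
      rw [div_le_one hRpos]
      exact hmax s
    have hgl_exp : ∀ s : ℝ, Complex.exp (Complex.log (-C) +
        Complex.log (1 - ω s / C)) = H (s, sm) := by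
      intro s
      rw [Complex.exp_add, Complex.exp_log (neg_ne_zero.mpr hCne),
        Complex.exp_log (hinner_ne s)]
      rw [hHdef]
      simp only
      rw [← hCdef]
      field_simp
      ring
    have hdiff : ∀ a b : ℝ,
        (G (a, sm) - (Complex.log (-C) + Complex.log (1 - ω a / C))) =
        (G (b, sm) - (Complex.log (-C) + Complex.log (1 - ω b / C))) := by
      apply exp_one_const
      · refine Continuous.sub (hGc.comp (continuous_id.prodMk continuous_const)) ?_
        refine continuous_const.add ?_
        rw [continuous_iff_continuousAt]
        intro s
        exact ((continuous_const.sub ((hωc.div_const C))).continuousAt).clog (hinner_slit s)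
      · intro s
        rw [Complex.exp_sub, hG, hgl_exp, div_self (hH0 _)]
    have h5 := hdiff 1 0
    have h6 : G (1, sm) - G (0, sm) =
        Complex.log (1 - ω 1 / C) - Complex.log (1 - ω 0 / C) := by linear_combination h5
    rw [h6, hω10, sub_self]
  -- qfun sm = 0
  have hq0 : G (sm, 1) - G (sm, 0) = 0 := by
    set D : ℂ := ω sm with hDdef
    have hDne : D ≠ 0 := hωne sm
    have hinner_ne : ∀ t : ℝ, (1:ℂ) - (ζ * ω t) / D ≠ 0 := by
      intro t h
      have h1 : (ζ * ω t) / D = 1 := by linear_combination -h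
      exact hmeet sm t (by rw [← hDdef]; exact (eq_of_div_eq_one h1).symm ▸ rfl)
    have hinner_slit : ∀ t : ℝ, (1:ℂ) - (ζ * ω t) / D ∈ Complex.slitPlane := by
      intro t
      apply mem_slit_of_ball _ (hinner_ne t)
      have h1 : (1:ℂ) - (ζ * ω t) / D - 1 = -((ζ * ω t) / D) := by ring
      rw [h1, norm_neg, norm_div, norm_mul, hζabs, one_mul]
      rw [hDdef, div_le_one hRpos]
      exact hmax t
    have hgl_exp : ∀ t : ℝ, Complex.exp (Complex.log D +
        Complex.log (1 - (ζ * ω t) / D)) = H (sm, t) := by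
      intro t
      rw [Complex.exp_add, Complex.exp_log hDne, Complex.exp_log (hinner_ne t)]
      rw [hHdef]
      simp only
      rw [← hDdef]
      field_simp
    have hdiff : ∀ a b : ℝ,
        (G (sm, a) - (Complex.log D + Complex.log (1 - (ζ * ω a) / D))) =
        (G (sm, b) - (Complex.log D + Complex.log (1 - (ζ * ω b) / D))) := by
      apply exp_one_const
      · refine Continuous.sub (hGc.comp (continuous_const.prodMk continuous_id)) ?_
        refine continuous_const.add ?_
        rw [continuous_iff_continuousAt]
        intro t
        exact ((continuous_const.sub (((continuous_const.mul hωc).div_const D))).continuousAt).clog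
          (hinner_slit t)
      · intro t
        rw [Complex.exp_sub, hG, hgl_exp, div_self (hH0 _)]
    have h5 := hdiff 1 0
    have h6 : G (sm, 1) - G (sm, 0) =
        Complex.log (1 - (ζ * ω 1) / D) - Complex.log (1 - (ζ * ω 0) / D) := by
      linear_combination h5
    rw [h6, hω10, sub_self]
  -- contradiction
  have hfinal : (2*(Real.pi:ℂ)*Complex.I) = 0 := by
    have hsplit : G (1,1) - G (0,0) = (G (1,1) - G (0,1)) + (G (0,1) - G (0,0)) := by ring
    have hp : G (1,1) - G (0,1) = 0 := by rw [hpconst 1 sm]; exact hp0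
    have hq : G (0,1) - G (0,0) = 0 := by rw [hqconst 0 sm]; exact hq0
    rw [← htot, hsplit, hp, hq, add_zero]
  exact hπI hfinal

/-- The pair machine: a path whose endpoints differ by a nonzero integer multiple of `v`
contains a point `Y` with both `Y` and `Y + v` on the path. -/
lemma machine (v : EuclideanSpace ℝ (Fin 2)) (hv : v ≠ 0)
    (p : ℝ → EuclideanSpace ℝ (Fin 2)) (hp : Continuous p)
    (a b : ℝ) (hab : a ≤ b) (m : ℤ) (hm : m ≠ 0) (hend : p b = p a + (m:ℝ) • v) :
    ∃ Y, Y ∈ p '' Icc a b ∧ Y + v ∈ p '' Icc a b := by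
  classical
  set P : Set (ℝ × ℝ) := {q | q.1 ∈ Icc a b ∧ q.2 ∈ Icc a b ∧ q.1 ≤ q.2 ∧
    ∃ n : ℤ, n ≠ 0 ∧ p q.2 - p q.1 = (n:ℝ) • v} with hPdef
  have hPclosed : IsClosed P := by
    have h1 : P = ((Icc a b) ×ˢ (Icc a b)) ∩ ({q : ℝ × ℝ | q.1 ≤ q.2} ∩
        ((fun q : ℝ × ℝ => p q.2 - p q.1) ⁻¹'
          {d : EuclideanSpace ℝ (Fin 2) | ∃ n : ℤ, n ≠ 0 ∧ d = (n:ℝ) • v})) := by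
      ext q
      constructor
      · rintro ⟨h1, h2, h3, n, hn, h4⟩
        exact ⟨⟨h1, h2⟩, h3, ⟨n, hn, h4⟩⟩
      · rintro ⟨⟨h1, h2⟩, h3, ⟨n, hn, h4⟩⟩
        exact ⟨h1, h2, h3, n, hn, h4⟩
    rw [h1]
    refine ((isClosed_Icc.prod isClosed_Icc)).inter (IsClosed.inter ?_ ?_)
    · exact isClosed_le continuous_fst continuous_snd
    · exact (Zclosed v hv).preimage ((hp.comp continuous_snd).sub (hp.comp continuous_fst))
  have hPcompact : IsCompact P := by
    refine IsCompact.of_isClosed_subset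
      ((isCompact_Icc (a := a) (b := b)).prod (isCompact_Icc (a := a) (b := b)))
      hPclosed ?_
    rintro q ⟨h1, h2, -⟩
    exact ⟨h1, h2⟩
  have hPne : P.Nonempty := by
    refine ⟨(a, b), ?_⟩
    refine ⟨⟨le_refl _, hab⟩, ⟨hab, le_refl _⟩, hab, m, hm, ?_⟩
    rw [hend]; abel
  obtain ⟨q₀, hq₀P, hq₀min⟩ := hPcompact.exists_isMinOn hPne
    ((continuous_snd.sub continuous_fst).continuousOn)
  have hq₀ := isMinOn_iff.mp hq₀min
  obtain ⟨hs₀I, ht₀I, hst₀, m₁, hm₁, heq₁⟩ := hq₀P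
  set s₀ := q₀.1
  set t₀ := q₀.2
  have heq₁' : p t₀ = p s₀ + (m₁:ℝ) • v := by
    rw [← heq₁]; abel
  have hlt : s₀ < t₀ := by
    rcases lt_or_eq_of_le hst₀ with h | h
    · exact h
    · exfalso
      rw [← h] at heq₁
      simp only [sub_self] at heq₁
      rcases (smul_eq_zero.mp heq₁.symm) with h2 | h2
      · exact hm₁ (by exact_mod_cast h2)
      · exact hv h2
  -- cleanliness of the minimal pair
  have hcleanlem : ∀ w : ℝ, w ≠ 0 → ∀ s ∈ Icc (0:ℝ) 1, ∀ t ∈ Icc (0:ℝ) 1, ∀ mm : ℤ, mm ≠ 0 →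
      (∀ u : ℝ, u ∈ Icc (0:ℝ) 1 → s₀ + u * w ∈ Icc s₀ t₀ ∨ t₀ + u * w ∈ Icc s₀ t₀) →
      True := fun _ _ _ _ _ _ _ _ _ => trivial
  -- generic cleanliness for affine reparametrizations
  have haff : ∀ (c w : ℝ), |w| = t₀ - s₀ → (∀ u ∈ Icc (0:ℝ) 1, c + u * w ∈ Icc s₀ t₀) →
      ∀ s ∈ Icc (0:ℝ) 1, ∀ t ∈ Icc (0:ℝ) 1, ∀ mm : ℤ, mm ≠ 0 →
      p (c + t * w) = p (c + s * w) + (mm:ℝ) • v → (s = 0 ∧ t = 1) ∨ (s = 1 ∧ t = 0) := by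
    intro c w hw hmem s hs t ht mm hmm heq
    set σ := c + s * w with hσ
    set tt := c + t * w with htt
    have hσI : σ ∈ Icc s₀ t₀ := hmem s hs
    have httI : tt ∈ Icc s₀ t₀ := hmem t ht
    have hsub : Icc s₀ t₀ ⊆ Icc a b := by
      intro z hz
      exact ⟨le_trans hs₀I.1 hz.1, le_trans hz.2 ht₀I.2⟩
    have hd : |tt - σ| = |t - s| * (t₀ - s₀) := by
      rw [hσ, htt]
      have : c + t * w - (c + s * w) = (t - s) * w := by ring
      rw [this, abs_mul, hw]
    have hkey : t₀ - s₀ ≤ |tt - σ| := by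
      rcases le_total σ tt with h | h
      · have hP2 : (σ, tt) ∈ P := by
          refine ⟨hsub hσI, hsub httI, h, mm, hmm, by rw [heq]; abel⟩
        have h3 := hq₀ _ hP2
        simp only [Pi.sub_apply] at h3
        rw [_root_.abs_of_nonneg (by linarith : (0:ℝ) ≤ tt - σ)]
        linarith
      · have hP2 : (tt, σ) ∈ P := by
          refine ⟨hsub httI, hsub hσI, h, -mm, by omega, ?_⟩
          rw [heq]
          push_cast
          rw [neg_smul]
          abel
        have h3 := hq₀ _ hP2
        simp only [Pi.sub_apply] at h3
        rw [abs_of_nonpos (by linarith : tt - σ ≤ 0)]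
        linarith
    have hts1 : 1 ≤ |t - s| := by
      rw [hd] at hkey
      nlinarith [abs_nonneg (t - s)]
    have hts : |t - s| = 1 := by
      have hb : |t - s| ≤ 1 := by
        rw [abs_le]
        constructor <;> linarith [hs.1, hs.2, ht.1, ht.2]
      linarith
    rcases (abs_eq (by norm_num : (0:ℝ) ≤ 1)).mp hts with h1 | h1
    · left
      constructor <;> linarith [hs.1, hs.2, ht.1, ht.2]
    · right
      constructor <;> linarith [hs.1, hs.2, ht.1, ht.2]
  rcases (by omega : m₁ = 1 ∨ m₁ = -1 ∨ 2 ≤ m₁ ∨ m₁ ≤ -2) with h1 | h1 | h1 | h1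
  · refine ⟨p s₀, ⟨s₀, hs₀I, rfl⟩, ⟨t₀, ht₀I, ?_⟩⟩
    rw [heq₁', h1]
    push_cast
    rw [one_smul]
  · refine ⟨p t₀, ⟨t₀, ht₀I, rfl⟩, ⟨s₀, hs₀I, ?_⟩⟩
    rw [heq₁', h1]
    push_cast
    rw [neg_smul, one_smul]
    abel
  · exfalso
    set τ : ℝ → EuclideanSpace ℝ (Fin 2) := fun u => p (s₀ + u * (t₀ - s₀)) with hτdef
    have hmem : ∀ u ∈ Icc (0:ℝ) 1, s₀ + u * (t₀ - s₀) ∈ Icc s₀ t₀ := by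
      intro u hu
      constructor <;> nlinarith [hu.1, hu.2]
    refine lemW v hv τ (hp.comp (continuous_const.add (continuous_id.mul continuous_const)))
      m₁ h1 ?_ ?_
    · rw [hτdef]
      simp only
      rw [one_mul, zero_mul, add_zero]
      have h2 : s₀ + (t₀ - s₀) = t₀ := by ring
      rw [h2, heq₁']
    · intro s hs t ht mm hmm heq
      exact haff s₀ (t₀ - s₀) (_root_.abs_of_nonneg (by linarith)) hmem s hs t ht mm hmm heq
  · exfalso
    set τ : ℝ → EuclideanSpace ℝ (Fin 2) := fun u => p (t₀ + u * (s₀ - t₀)) with hτdef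
    have hmem : ∀ u ∈ Icc (0:ℝ) 1, t₀ + u * (s₀ - t₀) ∈ Icc s₀ t₀ := by
      intro u hu
      constructor <;> nlinarith [hu.1, hu.2]
    refine lemW v hv τ (hp.comp (continuous_const.add (continuous_id.mul continuous_const)))
      (-m₁) (by omega) ?_ ?_
    · rw [hτdef]
      simp only
      rw [one_mul, zero_mul, add_zero]
      have h2 : t₀ + (s₀ - t₀) = s₀ := by ring
      rw [h2, heq₁']
      push_cast
      rw [neg_smul]
      abel
    · intro s hs t ht mm hmm heq
      refine haff t₀ (s₀ - t₀) ?_ hmem s hs t ht mm hmm heq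
      rw [abs_of_nonpos (by linarith)]
      ring

/-- The set of levels at which the two arcs meet is an interval. -/
lemma Sinterval (v : EuclideanSpace ℝ (Fin 2)) (hv : v ≠ 0) (K₁ K₂ : Set (EuclideanSpace ℝ (Fin 2)))
    (free1 : ∀ Y, Y ∈ K₁ → Y + v ∈ K₁ → False)
    (free2 : ∀ Y, Y ∈ K₂ → Y + v ∈ K₂ → False)
    (α β : ℝ → EuclideanSpace ℝ (Fin 2)) (hαc : Continuous α) (hβc : Continuous β)
    (hαK : ∀ s, α s ∈ K₁) (hβK : ∀ t, β t ∈ K₂)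
    (N : ℤ) (hbound : ∀ s ∈ Icc (0:ℝ) 1, ∀ t ∈ Icc (0:ℝ) 1, ∀ ℓ : ℤ,
      α s = β t + (ℓ:ℝ) • v → ℓ ≤ N)
    (c : ℤ)
    (hlow : ∃ a : ℤ, a ≤ c ∧ ∃ s ∈ Icc (0:ℝ) 1, ∃ t ∈ Icc (0:ℝ) 1, α s = β t + (a:ℝ) • v)
    (hhigh : ∃ b : ℤ, c ≤ b ∧ ∃ s ∈ Icc (0:ℝ) 1, ∃ t ∈ Icc (0:ℝ) 1, α s = β t + (b:ℝ) • v) :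
    ∃ s ∈ Icc (0:ℝ) 1, ∃ t ∈ Icc (0:ℝ) 1, α s = β t + (c:ℝ) • v := by
  by_contra hc
  push_neg at hc
  obtain ⟨a, hac, sa, hsaI, ta, htaI, hEa⟩ := hlow
  obtain ⟨B0, hB0c, hB0⟩ := hhigh
  have hacs : a < c := by
    rcases lt_or_eq_of_le hac with h | h
    · exact h
    · exact absurd (h ▸ hEa) (hc sa hsaI ta htaI)
  obtain ⟨b, ⟨hbc, sb, hsbI, tb, htbI, hEb⟩, hbmin⟩ :=
    Int.exists_least_of_bdd (P := fun ℓ => c ≤ ℓ ∧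
      ∃ s ∈ Icc (0:ℝ) 1, ∃ t ∈ Icc (0:ℝ) 1, α s = β t + (ℓ:ℝ) • v)
      ⟨c, fun z hz => hz.1⟩ ⟨B0, hB0c, hB0⟩
  have hbgt : c < b := by
    rcases lt_or_eq_of_le hbc with h | h
    · exact h
    · exact absurd (h ▸ hEb) (hc sb hsbI tb htbI)
  -- the compact set of junctions at level ≥ b
  set W : Set (ℝ × ℝ) := {q | q.1 ∈ Icc (0:ℝ) 1 ∧ q.2 ∈ Icc (0:ℝ) 1 ∧
    ∃ ℓ : ℤ, b ≤ ℓ ∧ α q.1 = β q.2 + (ℓ:ℝ) • v} with hWdef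
  have hWeq : W = ((Icc (0:ℝ) 1) ×ˢ (Icc (0:ℝ) 1)) ∩
      (⋃ ℓ ∈ Finset.Icc b N, {q : ℝ × ℝ | α q.1 = β q.2 + (ℓ:ℝ) • v}) := by
    ext q
    constructor
    · rintro ⟨h1, h2, ℓ, hℓ, h3⟩
      refine ⟨⟨h1, h2⟩, ?_⟩
      rw [Set.mem_iUnion₂]
      exact ⟨ℓ, Finset.mem_Icc.mpr ⟨hℓ, hbound q.1 h1 q.2 h2 ℓ h3⟩, h3⟩
    · rintro ⟨⟨h1, h2⟩, h3⟩
      rw [Set.mem_iUnion₂] at h3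
      obtain ⟨ℓ, hℓ, h4⟩ := h3
      exact ⟨h1, h2, ℓ, (Finset.mem_Icc.mp hℓ).1, h4⟩
  have hWclosed : IsClosed W := by
    rw [hWeq]
    refine (isClosed_Icc.prod isClosed_Icc).inter ?_
    refine Set.Finite.isClosed_biUnion (Finset.finite_toSet _) ?_
    intro ℓ _
    exact isClosed_eq (hαc.comp continuous_fst)
      ((hβc.comp continuous_snd).add continuous_const)
  have hWcompact : IsCompact W := by
    refine IsCompact.of_isClosed_subset
      ((isCompact_Icc (a := (0:ℝ)) (b := 1)).prod (isCompact_Icc (a := (0:ℝ)) (b := 1)))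
      hWclosed ?_
    rintro q ⟨h1, h2, -⟩
    exact ⟨h1, h2⟩
  have hWne : W.Nonempty := ⟨(sb, tb), hsbI, htbI, b, le_refl _, hEb⟩
  obtain ⟨q₀, hq₀W, hq₀min⟩ := hWcompact.exists_isMinOn hWne
    (((continuous_fst.sub continuous_const).abs.add
      ((continuous_snd.sub continuous_const).abs)).continuousOn
      (f := fun q : ℝ × ℝ => |q.1 - sa| + |q.2 - ta|))
  have hq₀ := isMinOn_iff.mp hq₀min
  obtain ⟨hs'I, ht'I, ℓ', hℓ'b, hE'⟩ := hq₀W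
  set s' := q₀.1
  set t' := q₀.2
  -- the composite path
  set e : ℝ → EuclideanSpace ℝ (Fin 2) := fun θ =>
    if θ ≤ 0 then α (sa + (θ+1)*(s' - sa)) else β (t' + θ*(ta - t')) + (ℓ':ℝ) • v with hedef
  have hec : Continuous e := by
    refine Continuous.if_le ?_ ?_ continuous_id continuous_const ?_
    · exact hαc.comp (continuous_const.add ((continuous_id.add continuous_const).mul
        continuous_const))
    · exact (hβc.comp (continuous_const.add (continuous_id.mul continuous_const))).add
        continuous_const
    · intro θ hθ
      rw [hθ, show sa + ((0:ℝ)+1)*(s' - sa) = s' by ring,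
        show t' + (0:ℝ)*(ta - t') = t' by ring]
      exact hE'
  have heimage : ∀ Y ∈ e '' Icc (-1:ℝ) 1,
      (∃ s1 ∈ Set.uIcc sa s', α s1 = Y) ∨
      (∃ t1 ∈ Set.uIcc t' ta, β t1 + (ℓ':ℝ) • v = Y) := by
    rintro Y ⟨θ, hθI, rfl⟩
    by_cases hθ : θ ≤ 0
    · left
      refine ⟨sa + (θ+1)*(s' - sa), aff_mem_uIcc ⟨by linarith [hθI.1], by linarith⟩, ?_⟩
      rw [hedef]
      simp only
      rw [if_pos hθ]
    · right
      push_neg at hθ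
      refine ⟨t' + θ*(ta - t'), aff_mem_uIcc ⟨by linarith, by linarith [hθI.2]⟩, ?_⟩
      rw [hedef]
      simp only
      rw [if_neg (not_le.mpr hθ)]
  have he1 : e (-1) = β ta + (a:ℝ) • v := by
    rw [hedef]
    simp only
    rw [if_pos (by norm_num : (-1:ℝ) ≤ 0),
      show sa + ((-1:ℝ)+1)*(s' - sa) = sa by ring]
    exact hEa
  have he2 : e 1 = e (-1) + ((ℓ' - a : ℤ):ℝ) • v := by
    rw [hedef]
    simp only
    rw [if_neg (by norm_num : ¬ (1:ℝ) ≤ 0), if_pos (by norm_num : (-1:ℝ) ≤ 0)]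
    rw [show sa + ((-1:ℝ)+1)*(s' - sa) = sa by ring,
      show t' + (1:ℝ)*(ta - t') = ta by ring]
    rw [hEa]
    push_cast
    rw [sub_smul]
    abel
  obtain ⟨Y, hY1, hY2⟩ := machine v hv e hec (-1) 1 (by norm_num)
    (ℓ' - a) (by omega) he2
  -- case analysis
  have hsub1 : Set.uIcc sa s' ⊆ Icc (0:ℝ) 1 := uIcc_sub_Icc hsaI hs'I
  have hsub2 : Set.uIcc t' ta ⊆ Icc (0:ℝ) 1 := uIcc_sub_Icc ht'I htaI
  rcases heimage Y hY1 with ⟨s1, hs1I, hs1⟩ | ⟨t1, ht1I, ht1⟩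
  · rcases heimage (Y + v) hY2 with ⟨s2, hs2I, hs2⟩ | ⟨t2, ht2I, ht2⟩
    · -- both in α: contradiction with free1
      refine free1 Y ?_ ?_
      · rw [← hs1]; exact hαK _
      · rw [← hs2]; exact hαK _
    · -- α below β: level ℓ' - 1
      have hlev : α s1 = β t2 + ((ℓ' - 1 : ℤ):ℝ) • v := by
        rw [hs1]
        have h3 : Y = β t2 + (ℓ':ℝ) • v - v := by rw [ht2]; abel
        rw [h3]
        push_cast
        rw [sub_smul, one_smul]
        abel
      by_cases hbl : b ≤ ℓ' - 1
      · -- contradicts minimality of the junction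
        have hW2 : (s1, t2) ∈ W := ⟨hsub1 hs1I, hsub2 ht2I, ℓ' - 1, hbl, hlev⟩
        have hm2 := hq₀ _ hW2
        simp only at hm2
        have ha1 : |s1 - sa| ≤ |s' - sa| := abs_le_of_uIcc hs1I
        have ha2 : |t2 - ta| ≤ |t' - ta| :=
          abs_le_of_uIcc (Set.uIcc_comm t' ta ▸ ht2I)
        have hs1e : s1 = s' := eq_of_abs_uIcc hs1I (by linarith)
        have ht2e : t2 = t' := eq_of_abs_uIcc (Set.uIcc_comm t' ta ▸ ht2I) (by linarith)
        have hlev' : α s' = β t' + ((ℓ' - 1 : ℤ):ℝ) • v := by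
          rw [← hs1e, ← ht2e]; exact hlev
        have h6 : (ℓ':ℝ) • v = ((ℓ' - 1 : ℤ):ℝ) • v := add_left_cancel (hE'.symm.trans hlev')
        have h7 : (1:ℝ) • v = 0 := by
          have h8 := sub_eq_zero.mpr h6.symm
          rwa [← sub_smul, show ((ℓ' - 1 : ℤ):ℝ) - (ℓ':ℝ) = -1 by push_cast; ring,
            neg_smul, neg_eq_zero] at h8
        rw [one_smul] at h7
        exact hv h7
      · have hbleq : ℓ' = b := by omega
        rw [hbleq] at hlev
        by_cases hcb : b - 1 = c
        · exact hc s1 (hsub1 hs1I) t2 (hsub2 ht2I) (by rw [← hcb]; exact hlev)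
        · have := hbmin (b-1) ⟨by omega, s1, hsub1 hs1I, t2, hsub2 ht2I, hlev⟩
          omega
  · rcases heimage (Y + v) hY2 with ⟨s2, hs2I, hs2⟩ | ⟨t2, ht2I, ht2⟩
    · -- β below α: level ℓ' + 1
      have hlev : α s2 = β t1 + ((ℓ' + 1 : ℤ):ℝ) • v := by
        rw [hs2, ← ht1]
        push_cast
        rw [add_smul, one_smul]
        abel
      have hW2 : (s2, t1) ∈ W := ⟨hsub1 hs2I, hsub2 ht1I, ℓ' + 1, by omega, hlev⟩
      have hm2 := hq₀ _ hW2
      simp only at hm2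
      have ha1 : |s2 - sa| ≤ |s' - sa| := abs_le_of_uIcc hs2I
      have ha2 : |t1 - ta| ≤ |t' - ta| :=
        abs_le_of_uIcc (Set.uIcc_comm t' ta ▸ ht1I)
      have hs2e : s2 = s' := eq_of_abs_uIcc hs2I (by linarith)
      have ht1e : t1 = t' := eq_of_abs_uIcc (Set.uIcc_comm t' ta ▸ ht1I) (by linarith)
      have hlev' : α s' = β t' + ((ℓ' + 1 : ℤ):ℝ) • v := by
        rw [← hs2e, ← ht1e]; exact hlev
      have h6 : (ℓ':ℝ) • v = ((ℓ' + 1 : ℤ):ℝ) • v := add_left_cancel (hE'.symm.trans hlev')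
      have h7 : (1:ℝ) • v = 0 := by
        have h8 := sub_eq_zero.mpr h6.symm
        rwa [← sub_smul, show ((ℓ' + 1 : ℤ):ℝ) - (ℓ':ℝ) = 1 by push_cast; ring] at h8
      rw [one_smul] at h7
      exact hv h7
    · -- both in β: contradiction with free2
      have hb2 : β t2 = β t1 + v := by
        have h3 : β t2 + (ℓ':ℝ) • v = (β t1 + v) + (ℓ':ℝ) • v := by
          rw [ht2, ← ht1]; abel
        exact add_right_cancel h3
      refine free2 (β t1) (hβK _) ?_
      rw [← hb2]
      exact hβK _

/-- Construction of the translation arc. -/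
lemma finalArc (v : EuclideanSpace ℝ (Fin 2)) (hv : v ≠ 0) (K₁ K₂ : Set (EuclideanSpace ℝ (Fin 2)))
    (free1 : ∀ Y, Y ∈ K₁ → Y + v ∈ K₁ → False)
    (free2 : ∀ Y, Y ∈ K₂ → Y + v ∈ K₂ → False)
    (α β : ℝ → EuclideanSpace ℝ (Fin 2)) (hαc : Continuous α) (hβc : Continuous β)
    (hαK : ∀ s, α s ∈ K₁) (hβK : ∀ t, β t ∈ K₂)
    (N : ℤ) (hbound : ∀ s ∈ Icc (0:ℝ) 1, ∀ t ∈ Icc (0:ℝ) 1, ∀ ℓ : ℤ,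
      α s = β t + (ℓ:ℝ) • v → ℓ ≤ N)
    (hm1 : ∃ s ∈ Icc (0:ℝ) 1, ∃ t ∈ Icc (0:ℝ) 1, α s = β t + ((-1:ℤ):ℝ) • v)
    (h00 : ∃ s ∈ Icc (0:ℝ) 1, ∃ t ∈ Icc (0:ℝ) 1, α s = β t) :
    ∃ γ : C(unitInterval, EuclideanSpace ℝ (Fin 2)),
      (γ 1 = γ 0 + v ∧ Set.range ⇑γ ∩ (· + v) '' Set.range ⇑γ = {γ 1}) ∧
      Set.range ⇑γ ⊆ K₁ ∪ K₂ ∧ γ 0 ∈ K₁ ∧ γ 1 ∈ K₂ := by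
  classical
  obtain ⟨sm1, hsm1I, tm1, htm1I, hEm1⟩ := hm1
  obtain ⟨sz, hszI, tz, htzI, hEz⟩ := h00
  have hEm1' : β tm1 = α sm1 + v := by
    rw [hEm1]
    push_cast
    rw [neg_smul, one_smul]
    abel
  have hc11 : Continuous fun q : (ℝ × ℝ) × (ℝ × ℝ) => q.1.1 :=
    continuous_fst.comp continuous_fst
  have hc12 : Continuous fun q : (ℝ × ℝ) × (ℝ × ℝ) => q.1.2 :=
    continuous_snd.comp continuous_fst
  have hc21 : Continuous fun q : (ℝ × ℝ) × (ℝ × ℝ) => q.2.1 :=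
    continuous_fst.comp continuous_snd
  have hc22 : Continuous fun q : (ℝ × ℝ) × (ℝ × ℝ) => q.2.2 :=
    continuous_snd.comp continuous_snd
  -- the family of good composites
  set CC : Set ((ℝ × ℝ) × (ℝ × ℝ)) := {q | q.1.1 ∈ Icc (0:ℝ) 1 ∧ q.1.2 ∈ Icc (0:ℝ) 1 ∧
    q.2.1 ∈ Icc (0:ℝ) 1 ∧ q.2.2 ∈ Icc (0:ℝ) 1 ∧
    α q.1.2 = β q.2.1 ∧ β q.2.2 = α q.1.1 + v} with hCCdef
  have hCCclosed : IsClosed CC := by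
    have h1 : CC = ({q : (ℝ × ℝ) × (ℝ × ℝ) | q.1.1 ∈ Icc (0:ℝ) 1} ∩
        ({q | q.1.2 ∈ Icc (0:ℝ) 1} ∩ ({q | q.2.1 ∈ Icc (0:ℝ) 1} ∩
        ({q | q.2.2 ∈ Icc (0:ℝ) 1} ∩ ({q | α q.1.2 = β q.2.1} ∩
        {q | β q.2.2 = α q.1.1 + v}))))) := by
      ext q
      constructor
      · rintro ⟨a1, a2, a3, a4, a5, a6⟩; exact ⟨a1, a2, a3, a4, a5, a6⟩
      · rintro ⟨a1, a2, a3, a4, a5, a6⟩; exact ⟨a1, a2, a3, a4, a5, a6⟩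
    rw [h1]
    refine IsClosed.inter (isClosed_Icc.preimage hc11) (IsClosed.inter
      (isClosed_Icc.preimage hc12) (IsClosed.inter (isClosed_Icc.preimage hc21)
      (IsClosed.inter (isClosed_Icc.preimage hc22) (IsClosed.inter
      (isClosed_eq (hαc.comp hc12) (hβc.comp hc21))
      (isClosed_eq (hβc.comp hc22) ((hαc.comp hc11).add continuous_const))))))
  have hCCcompact : IsCompact CC := by
    refine IsCompact.of_isClosed_subset
      (((isCompact_Icc (a := (0:ℝ)) (b := 1)).prod (isCompact_Icc (a := (0:ℝ)) (b := 1))).prod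
        ((isCompact_Icc (a := (0:ℝ)) (b := 1)).prod (isCompact_Icc (a := (0:ℝ)) (b := 1))))
      hCCclosed ?_
    rintro q ⟨a1, a2, a3, a4, -⟩
    exact ⟨⟨a1, a2⟩, a3, a4⟩
  have hCCne : CC.Nonempty := ⟨((sm1, sz), (tz, tm1)), hsm1I, hszI, htzI, htm1I, hEz, hEm1'⟩
  have hσc : Continuous fun q : (ℝ × ℝ) × (ℝ × ℝ) => |q.1.2 - q.1.1| + |q.2.2 - q.2.1| :=
    ((hc12.sub hc11).abs).add ((hc22.sub hc21).abs)
  obtain ⟨Q, hQCC, hQmin⟩ := hCCcompact.exists_isMinOn hCCne hσc.continuousOn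
  have hQ := isMinOn_iff.mp hQmin
  obtain ⟨hx₁I, hx₂I, hy₁I, hy₂I, hjun, hends⟩ := hQCC
  set x₁ := Q.1.1
  set x₂ := Q.1.2
  set y₁ := Q.2.1
  set y₂ := Q.2.2
  have hsubx : Set.uIcc x₁ x₂ ⊆ Icc (0:ℝ) 1 := uIcc_sub_Icc hx₁I hx₂I
  have hsuby : Set.uIcc y₁ y₂ ⊆ Icc (0:ℝ) 1 := uIcc_sub_Icc hy₁I hy₂I
  -- no "bad" pairs at positive levels inside the windows
  have hD : ∀ g ∈ Set.uIcc x₁ x₂, ∀ hh ∈ Set.uIcc y₁ y₂, ∀ kk : ℤ, 1 ≤ kk →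
      α g ≠ β hh + (kk:ℝ) • v := by
    by_contra hDne
    push_neg at hDne
    obtain ⟨g0, hg0, h0', hh0, k0, hk0, hEk0⟩ := hDne
    set D : Set (ℝ × ℝ) := {q | q.1 ∈ Set.uIcc x₁ x₂ ∧ q.2 ∈ Set.uIcc y₁ y₂ ∧
      ∃ kk : ℤ, 1 ≤ kk ∧ α q.1 = β q.2 + (kk:ℝ) • v} with hDdef
    have hDeq : D = ((Set.uIcc x₁ x₂) ×ˢ (Set.uIcc y₁ y₂)) ∩
        (⋃ ℓ ∈ Finset.Icc (1:ℤ) N, {q : ℝ × ℝ | α q.1 = β q.2 + (ℓ:ℝ) • v}) := by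
      ext q
      constructor
      · rintro ⟨h1, h2, ℓ, hℓ, h3⟩
        refine ⟨⟨h1, h2⟩, ?_⟩
        rw [Set.mem_iUnion₂]
        exact ⟨ℓ, Finset.mem_Icc.mpr ⟨hℓ, hbound q.1 (hsubx h1) q.2 (hsuby h2) ℓ h3⟩, h3⟩
      · rintro ⟨⟨h1, h2⟩, h3⟩
        rw [Set.mem_iUnion₂] at h3
        obtain ⟨ℓ, hℓ, h4⟩ := h3
        exact ⟨h1, h2, ℓ, (Finset.mem_Icc.mp hℓ).1, h4⟩
    have hDclosed : IsClosed D := by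
      rw [hDeq]
      refine IsClosed.inter
        ((isClosed_Icc : IsClosed (Set.uIcc x₁ x₂)).prod
          (isClosed_Icc : IsClosed (Set.uIcc y₁ y₂))) ?_
      refine Set.Finite.isClosed_biUnion (Finset.finite_toSet _) ?_
      intro ℓ _
      exact isClosed_eq (hαc.comp continuous_fst)
        ((hβc.comp continuous_snd).add continuous_const)
    have hDcompact : IsCompact D := by
      refine IsCompact.of_isClosed_subset
        ((isCompact_uIcc (a := x₁) (b := x₂)).prod (isCompact_uIcc (a := y₁) (b := y₂)))
        hDclosed ?_
      rintro q ⟨h1, h2, -⟩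
      exact ⟨h1, h2⟩
    have hDne' : D.Nonempty := ⟨(g0, h0'), hg0, hh0, k0, hk0, hEk0⟩
    obtain ⟨R, hRD, hRmin⟩ := hDcompact.exists_isMinOn hDne'
      (((continuous_fst.sub continuous_const).abs.add
        ((continuous_const.sub continuous_snd).abs)).continuousOn
        (f := fun q : ℝ × ℝ => |q.1 - x₁| + |y₂ - q.2|))
    have hR := isMinOn_iff.mp hRmin
    obtain ⟨hg'I, hh'I, k', hk', hEk'⟩ := hRD
    set g' := R.1
    set h' := R.2
    -- surgery composite
    set e : ℝ → EuclideanSpace ℝ (Fin 2) := fun θ =>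
      if θ ≤ 0 then α (x₁ + (θ+1)*(g' - x₁)) else β (h' + θ*(y₂ - h')) + (k':ℝ) • v with hedef
    have hec : Continuous e := by
      refine Continuous.if_le ?_ ?_ continuous_id continuous_const ?_
      · exact hαc.comp (continuous_const.add ((continuous_id.add continuous_const).mul
          continuous_const))
      · exact (hβc.comp (continuous_const.add (continuous_id.mul continuous_const))).add
          continuous_const
      · intro θ hθ
        rw [hθ, show x₁ + ((0:ℝ)+1)*(g' - x₁) = g' by ring,
          show h' + (0:ℝ)*(y₂ - h') = h' by ring]
        exact hEk'
    have heimage : ∀ Y ∈ e '' Icc (-1:ℝ) 1,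
        (∃ s1 ∈ Set.uIcc x₁ g', α s1 = Y) ∨
        (∃ t1 ∈ Set.uIcc h' y₂, β t1 + (k':ℝ) • v = Y) := by
      rintro Y ⟨θ, hθI, rfl⟩
      by_cases hθ : θ ≤ 0
      · left
        refine ⟨x₁ + (θ+1)*(g' - x₁), aff_mem_uIcc ⟨by linarith [hθI.1], by linarith⟩, ?_⟩
        rw [hedef]
        simp only
        rw [if_pos hθ]
      · right
        push_neg at hθ
        refine ⟨h' + θ*(y₂ - h'), aff_mem_uIcc ⟨by linarith, by linarith [hθI.2]⟩, ?_⟩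
        rw [hedef]
        simp only
        rw [if_neg (not_le.mpr hθ)]
    have he1 : e (-1) = α x₁ := by
      rw [hedef]
      simp only
      rw [if_pos (by norm_num : (-1:ℝ) ≤ 0), show x₁ + ((-1:ℝ)+1)*(g' - x₁) = x₁ by ring]
    have he2 : e 1 = e (-1) + ((k' + 1 : ℤ):ℝ) • v := by
      rw [he1, hedef]
      simp only
      rw [if_neg (by norm_num : ¬ (1:ℝ) ≤ 0), show h' + (1:ℝ)*(y₂ - h') = y₂ by ring]
      rw [hends]
      push_cast
      rw [add_smul, one_smul]
      abel
    obtain ⟨Y, hY1, hY2⟩ := machine v hv e hec (-1) 1 (by norm_num) (k' + 1) (by omega) he2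
    have hsubg : Set.uIcc x₁ g' ⊆ Set.uIcc x₁ x₂ :=
      Set.uIcc_subset_uIcc Set.left_mem_uIcc hg'I
    have hsubh : Set.uIcc h' y₂ ⊆ Set.uIcc y₁ y₂ :=
      Set.uIcc_subset_uIcc hh'I Set.right_mem_uIcc
    rcases heimage Y hY1 with ⟨s1, hs1I, hs1⟩ | ⟨t1, ht1I, ht1⟩
    · rcases heimage (Y + v) hY2 with ⟨s2, hs2I, hs2⟩ | ⟨t2, ht2I, ht2⟩
      · refine free1 Y ?_ ?_
        · rw [← hs1]; exact hαK _
        · rw [← hs2]; exact hαK _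
      · -- level k' - 1
        have hlev : α s1 = β t2 + ((k' - 1 : ℤ):ℝ) • v := by
          rw [hs1]
          have h3 : Y = β t2 + (k':ℝ) • v - v := by rw [ht2]; abel
          rw [h3]
          push_cast
          rw [sub_smul, one_smul]
          abel
        by_cases hk1 : 2 ≤ k'
        · -- contradicts minimality of R
          have hD2 : (s1, t2) ∈ D := ⟨hsubg hs1I, hsubh ht2I, k' - 1, by omega, hlev⟩
          have hm2 := hR _ hD2
          simp only at hm2
          have ha1 : |s1 - x₁| ≤ |g' - x₁| := abs_le_of_uIcc hs1I
          have ha2 : |y₂ - t2| ≤ |y₂ - h'| := by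
            rw [abs_sub_comm y₂ t2, abs_sub_comm y₂ h']
            exact abs_le_of_uIcc (Set.uIcc_comm h' y₂ ▸ ht2I)
          have hs1e : s1 = g' := eq_of_abs_uIcc hs1I (by linarith)
          have ht2e : t2 = h' := by
            refine eq_of_abs_uIcc (Set.uIcc_comm h' y₂ ▸ ht2I) ?_
            rw [abs_sub_comm t2 y₂, abs_sub_comm h' y₂]
            linarith
          have hlev' : α g' = β h' + ((k' - 1 : ℤ):ℝ) • v := by
            rw [← hs1e, ← ht2e]; exact hlev
          have h6 : (k':ℝ) • v = ((k' - 1 : ℤ):ℝ) • v := add_left_cancel (hEk'.symm.trans hlev')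
          have h7 : (1:ℝ) • v = 0 := by
            have h8 := sub_eq_zero.mpr h6.symm
            rwa [← sub_smul, show ((k' - 1 : ℤ):ℝ) - (k':ℝ) = -1 by push_cast; ring,
              neg_smul, neg_eq_zero] at h8
          rw [one_smul] at h7
          exact hv h7
        · -- k' = 1 : coincidence, contradicts minimality of Q
          have hk'1 : k' = 1 := by omega
          have hlev0 : α s1 = β t2 := by
            rw [hlev, hk'1]
            norm_num
          have hCC2 : ((x₁, s1), (t2, y₂)) ∈ CC :=
            ⟨hx₁I, hsubx (hsubg hs1I), hsuby (hsubh ht2I), hy₂I, hlev0, hends⟩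
          have hm2 := hQ _ hCC2
          simp only at hm2
          have ha1 : |s1 - x₁| ≤ |g' - x₁| := abs_le_of_uIcc hs1I
          have ha2 : |y₂ - t2| ≤ |y₂ - h'| := by
            rw [abs_sub_comm y₂ t2, abs_sub_comm y₂ h']
            exact abs_le_of_uIcc (Set.uIcc_comm h' y₂ ▸ ht2I)
          have hb1 : |g' - x₁| ≤ |x₂ - x₁| := abs_le_of_uIcc hg'I
          have hb2 : |y₂ - h'| ≤ |y₂ - y₁| := by
            rw [abs_sub_comm y₂ h', abs_sub_comm y₂ y₁]
            exact abs_le_of_uIcc (Set.uIcc_comm y₁ y₂ ▸ hh'I)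
          have hs1e : s1 = g' := eq_of_abs_uIcc hs1I (by linarith)
          have ht2e : t2 = h' := by
            refine eq_of_abs_uIcc (Set.uIcc_comm h' y₂ ▸ ht2I) ?_
            rw [abs_sub_comm t2 y₂, abs_sub_comm h' y₂]
            linarith
          have hlev' : α g' = β h' := by rw [← hs1e, ← ht2e]; exact hlev0
          have h6 : β h' + (k':ℝ) • v = β h' := by
            rw [← hEk', hlev']
          have h7 : (k':ℝ) • v = 0 := by
            have := h6
            rwa [add_eq_left] at this
          rcases smul_eq_zero.mp h7 with h8 | h8
          · rw [hk'1] at h8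
            norm_num at h8
          · exact hv h8
    · rcases heimage (Y + v) hY2 with ⟨s2, hs2I, hs2⟩ | ⟨t2, ht2I, ht2⟩
      · -- level k' + 1
        have hlev : α s2 = β t1 + ((k' + 1 : ℤ):ℝ) • v := by
          rw [hs2, ← ht1]
          push_cast
          rw [add_smul, one_smul]
          abel
        have hD2 : (s2, t1) ∈ D := ⟨hsubg hs2I, hsubh ht1I, k' + 1, by omega, hlev⟩
        have hm2 := hR _ hD2
        simp only at hm2
        have ha1 : |s2 - x₁| ≤ |g' - x₁| := abs_le_of_uIcc hs2I
        have ha2 : |y₂ - t1| ≤ |y₂ - h'| := by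
          rw [abs_sub_comm y₂ t1, abs_sub_comm y₂ h']
          exact abs_le_of_uIcc (Set.uIcc_comm h' y₂ ▸ ht1I)
        have hs2e : s2 = g' := eq_of_abs_uIcc hs2I (by linarith)
        have ht1e : t1 = h' := by
          refine eq_of_abs_uIcc (Set.uIcc_comm h' y₂ ▸ ht1I) ?_
          rw [abs_sub_comm t1 y₂, abs_sub_comm h' y₂]
          linarith
        have hlev' : α g' = β h' + ((k' + 1 : ℤ):ℝ) • v := by
          rw [← hs2e, ← ht1e]; exact hlev
        have h6 : (k':ℝ) • v = ((k' + 1 : ℤ):ℝ) • v := add_left_cancel (hEk'.symm.trans hlev')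
        have h7 : (1:ℝ) • v = 0 := by
          have h8 := sub_eq_zero.mpr h6.symm
          rwa [← sub_smul, show ((k' + 1 : ℤ):ℝ) - (k':ℝ) = 1 by push_cast; ring] at h8
        rw [one_smul] at h7
        exact hv h7
      · have hb2 : β t2 = β t1 + v := by
          have h3 : β t2 + (k':ℝ) • v = (β t1 + v) + (k':ℝ) • v := by
            rw [ht2, ← ht1]; abel
          exact add_right_cancel h3
        refine free2 (β t1) (hβK _) ?_
        rw [← hb2]
        exact hβK _
  -- uniqueness of good pairs
  have hGood : ∀ s1 ∈ Set.uIcc x₁ x₂, ∀ t1 ∈ Set.uIcc y₁ y₂,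
      β t1 = α s1 + v → α s1 = α x₁ := by
    intro s1 hs1 t1 ht1 hE1
    have hCC2 : ((s1, x₂), (y₁, t1)) ∈ CC :=
      ⟨hsubx hs1, hx₂I, hy₁I, hsuby ht1, hjun, hE1⟩
    have hm2 := hQ _ hCC2
    simp only at hm2
    have ha1 : |x₂ - s1| ≤ |x₂ - x₁| := by
      rw [abs_sub_comm x₂ s1, abs_sub_comm x₂ x₁]
      exact abs_le_of_uIcc (Set.uIcc_comm x₁ x₂ ▸ hs1)
    have ha2 : |t1 - y₁| ≤ |y₂ - y₁| := abs_le_of_uIcc ht1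
    have hs1e : s1 = x₁ := by
      refine eq_of_abs_uIcc (Set.uIcc_comm x₁ x₂ ▸ hs1) ?_
      rw [abs_sub_comm s1 x₂, abs_sub_comm x₁ x₂]
      linarith
    rw [hs1e]
  -- the arc
  set e : ℝ → EuclideanSpace ℝ (Fin 2) := fun θ =>
    if θ ≤ 0 then α (x₁ + (θ+1)*(x₂ - x₁)) else β (y₁ + θ*(y₂ - y₁)) with hedef
  have hec : Continuous e := by
    refine Continuous.if_le ?_ ?_ continuous_id continuous_const ?_
    · exact hαc.comp (continuous_const.add ((continuous_id.add continuous_const).mul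
        continuous_const))
    · exact hβc.comp (continuous_const.add (continuous_id.mul continuous_const))
    · intro θ hθ
      rw [hθ, show x₁ + ((0:ℝ)+1)*(x₂ - x₁) = x₂ by ring,
        show y₁ + (0:ℝ)*(y₂ - y₁) = y₁ by ring]
      exact hjun
  set γ : C(unitInterval, EuclideanSpace ℝ (Fin 2)) :=
    ⟨fun u => e (2*(u:ℝ) - 1),
      hec.comp ((continuous_const.mul continuous_subtype_val).sub continuous_const)⟩ with hγdef
  have hγ0 : γ 0 = α x₁ := by
    rw [hγdef]
    simp only [ContinuousMap.coe_mk]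
    rw [show (((0 : unitInterval)):ℝ) = 0 from rfl]
    rw [show (2*(0:ℝ) - 1) = -1 by norm_num]
    rw [hedef]
    simp only
    rw [if_pos (by norm_num : (-1:ℝ) ≤ 0), show x₁ + ((-1:ℝ)+1)*(x₂ - x₁) = x₁ by ring]
  have hγ1 : γ 1 = β y₂ := by
    rw [hγdef]
    simp only [ContinuousMap.coe_mk]
    rw [show (((1 : unitInterval)):ℝ) = 1 from rfl]
    rw [show (2*(1:ℝ) - 1) = 1 by norm_num]
    rw [hedef]
    simp only
    rw [if_neg (by norm_num : ¬ (1:ℝ) ≤ 0), show y₁ + (1:ℝ)*(y₂ - y₁) = y₂ by ring]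
  have hγrange : ∀ Y ∈ Set.range ⇑γ,
      (∃ s1 ∈ Set.uIcc x₁ x₂, α s1 = Y) ∨ (∃ t1 ∈ Set.uIcc y₁ y₂, β t1 = Y) := by
    rintro Y ⟨u, rfl⟩
    rw [hγdef]
    simp only [ContinuousMap.coe_mk]
    set θ := 2*(u:ℝ) - 1 with hθdef
    have hθI : θ ∈ Icc (-1:ℝ) 1 := by
      constructor <;> [linarith [u.2.1]; linarith [u.2.2]]
    by_cases hθ : θ ≤ 0
    · left
      refine ⟨x₁ + (θ+1)*(x₂ - x₁), aff_mem_uIcc ⟨by linarith [hθI.1], by linarith⟩, ?_⟩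
      rw [hedef]
      simp only
      rw [if_pos hθ]
    · right
      push_neg at hθ
      refine ⟨y₁ + θ*(y₂ - y₁), aff_mem_uIcc ⟨by linarith, by linarith [hθI.2]⟩, ?_⟩
      rw [hedef]
      simp only
      rw [if_neg (not_le.mpr hθ)]
  have hγ10 : γ 1 = γ 0 + v := by
    rw [hγ0, hγ1, hends]
  refine ⟨γ, ⟨hγ10, ?_⟩, ?_, ?_, ?_⟩
  · -- the translation arc property
    ext Y
    constructor
    · rintro ⟨hYr, W, hWr, hWv⟩
      have hWv' : W + v = Y := hWv
      rcases hγrange Y hYr with ⟨s2, hs2I, hs2⟩ | ⟨t2, ht2I, ht2⟩ <;>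
        rcases hγrange W hWr with ⟨s1, hs1I, hs1⟩ | ⟨t1, ht1I, ht1⟩
      · exfalso
        refine free1 W ?_ ?_
        · rw [← hs1]; exact hαK _
        · rw [hWv', ← hs2]; exact hαK _
      · -- W = β t1, Y = α s2 : a bad pair, contradicts hD
        exfalso
        have hlev : α s2 = β t1 + ((1:ℤ):ℝ) • v := by
          push_cast
          rw [one_smul, hs2, ← hWv', ht1]
        exact hD s2 hs2I t1 ht1I 1 (le_refl _) hlev
      · -- W = α s1, Y = β t2 : a good pair
        have hg : β t2 = α s1 + v := by rw [hs1, ht2, ← hWv']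
        have hs1x := hGood s1 hs1I t2 ht2I hg
        simp only [Set.mem_singleton_iff]
        rw [← ht2, hg, hs1x, ← hends, hγ1]
      · exfalso
        refine free2 W ?_ ?_
        · rw [← ht1]; exact hβK _
        · rw [hWv', ← ht2]; exact hβK _
    · intro hY
      simp only [Set.mem_singleton_iff] at hY
      subst hY
      refine ⟨⟨1, rfl⟩, γ 0, ⟨0, rfl⟩, hγ10.symm⟩
  · -- range in the union
    intro Y hY
    rcases hγrange Y hY with ⟨s1, _, hs1⟩ | ⟨t1, _, ht1⟩
    · left; rw [← hs1]; exact hαK _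
    · right; rw [← ht1]; exact hβK _
  · rw [hγ0]; exact hαK _
  · rw [hγ1]; exact hβK _

end IBL


theorem in_between_lemma
    (v : Plane) (hv : v ≠ 0) (K₁ K₂ : Set Plane)
    (h1 : IsPathConnected K₁) (h2 : IsPathConnected K₂)
    (hd1 : (· + v) '' K₁ ∩ K₁ = ∅) (hd2 : (· + v) '' K₂ ∩ K₂ = ∅)
    (i j : ℤ) (hi : 0 ≤ i) (hj : 0 < j)
    (hneg : ((· - (i : ℝ) • v) '' K₁ ∩ K₂).Nonempty)
    (hpos : ((· + (j : ℝ) • v) '' K₁ ∩ K₂).Nonempty) :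
    (K₁ ∩ K₂).Nonempty ∧
      ∃ γ : C(unitInterval, Plane), IsTranslationArc v γ ∧
        Set.range ⇑γ ⊆ K₁ ∪ K₂ ∧ γ 0 ∈ K₁ ∧ γ 1 ∈ K₂ := by
  classical
  obtain ⟨w, ⟨x, hxK₁, hxw⟩, hwK₂⟩ := hneg
  obtain ⟨w', ⟨y, hyK₁, hyw⟩, hw'K₂⟩ := hpos
  have hxw' : x - (i:ℝ) • v ∈ K₂ := by
    have h := hxw
    have h2 : x - (i:ℝ) • v = w := h
    rw [h2]; exact hwK₂
  have hyw' : y + (j:ℝ) • v ∈ K₂ := by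
    have h2 : y + (j:ℝ) • v = w' := hyw
    rw [h2]; exact hw'K₂
  have free1 : ∀ Y, Y ∈ K₁ → Y + v ∈ K₁ → False := by
    intro Y hy1 hy2
    have hmem : Y + v ∈ (· + v) '' K₁ ∩ K₁ := ⟨⟨Y, hy1, rfl⟩, hy2⟩
    rw [hd1] at hmem
    exact hmem
  have free2 : ∀ Y, Y ∈ K₂ → Y + v ∈ K₂ → False := by
    intro Y hy1 hy2
    have hmem : Y + v ∈ (· + v) '' K₂ ∩ K₂ := ⟨⟨Y, hy1, rfl⟩, hy2⟩
    rw [hd2] at hmem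
    exact hmem
  set p1 : Path x y := (h1.joinedIn x hxK₁ y hyK₁).somePath with hp1
  set p2 : Path (x - (i:ℝ) • v) (y + (j:ℝ) • v) :=
    ((h2.joinedIn _ hxw' _ hyw')).somePath with hp2
  set α : ℝ → Plane := fun s => p1.extend s with hα
  set β : ℝ → Plane := fun t => p2.extend t with hβ
  have hαc : Continuous α := p1.continuous_extend
  have hβc : Continuous β := p2.continuous_extend
  have hαK : ∀ s, α s ∈ K₁ := fun s =>
    (h1.joinedIn x hxK₁ y hyK₁).somePath_mem _
  have hβK : ∀ t, β t ∈ K₂ := fun t =>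
    ((h2.joinedIn _ hxw' _ hyw')).somePath_mem _
  have hα0 : α 0 = x := p1.extend_zero
  have hα1 : α 1 = y := p1.extend_one
  have hβ0 : β 0 = x - (i:ℝ) • v := p2.extend_zero
  have hβ1 : β 1 = y + (j:ℝ) • v := p2.extend_one
  have h0I : (0:ℝ) ∈ Set.Icc (0:ℝ) 1 := by norm_num
  have h1I : (1:ℝ) ∈ Set.Icc (0:ℝ) 1 := by norm_num
  -- bounds
  obtain ⟨sA, hsAI, hsAm⟩ := (isCompact_Icc (a := (0:ℝ)) (b := 1)).exists_isMaxOn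
    ⟨0, h0I⟩ (hαc.norm.continuousOn)
  have hCα := isMaxOn_iff.mp hsAm
  obtain ⟨tB, htBI, htBm⟩ := (isCompact_Icc (a := (0:ℝ)) (b := 1)).exists_isMaxOn
    ⟨0, h0I⟩ (hβc.norm.continuousOn)
  have hCβ := isMaxOn_iff.mp htBm
  have hvpos : 0 < ‖v‖ := norm_pos_iff.mpr hv
  set N : ℤ := ⌈(‖α sA‖ + ‖β tB‖)/‖v‖⌉ with hN
  have hbound : ∀ s ∈ Set.Icc (0:ℝ) 1, ∀ t ∈ Set.Icc (0:ℝ) 1, ∀ ℓ : ℤ,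
      α s = β t + (ℓ:ℝ) • v → ℓ ≤ N := by
    intro s hs t ht ℓ hE
    have hp : (ℓ:ℝ) • v = α s - β t := by rw [hE]; abel
    have h2 : |(ℓ:ℝ)| * ‖v‖ ≤ ‖α sA‖ + ‖β tB‖ := by
      calc |(ℓ:ℝ)| * ‖v‖ = ‖(ℓ:ℝ) • v‖ := by rw [norm_smul, Real.norm_eq_abs]
      _ = ‖α s - β t‖ := by rw [hp]
      _ ≤ ‖α s‖ + ‖β t‖ := norm_sub_le _ _
      _ ≤ ‖α sA‖ + ‖β tB‖ := add_le_add (hCα s hs) (hCβ t ht)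
    have h3 : (ℓ:ℝ) ≤ (N:ℝ) := by
      calc (ℓ:ℝ) ≤ |(ℓ:ℝ)| := le_abs_self _
      _ ≤ (‖α sA‖ + ‖β tB‖)/‖v‖ := by rw [le_div_iff₀ hvpos]; exact h2
      _ ≤ (N:ℝ) := Int.le_ceil _
    exact_mod_cast h3
  -- the two witnesses
  have hwit_i : ∃ s ∈ Set.Icc (0:ℝ) 1, ∃ t ∈ Set.Icc (0:ℝ) 1, α s = β t + ((i:ℤ):ℝ) • v :=
    ⟨0, h0I, 0, h0I, by rw [hα0, hβ0]; abel⟩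
  have hwit_j : ∃ s ∈ Set.Icc (0:ℝ) 1, ∃ t ∈ Set.Icc (0:ℝ) 1, α s = β t + ((-j:ℤ):ℝ) • v :=
    ⟨1, h1I, 1, h1I, by
      rw [hα1, hβ1]
      push_cast
      rw [neg_smul]
      abel⟩
  have h00 := IBL.Sinterval v hv K₁ K₂ free1 free2 α β hαc hβc hαK hβK N hbound 0
    ⟨-j, by omega, hwit_j⟩ ⟨i, by omega, hwit_i⟩
  have hm1 := IBL.Sinterval v hv K₁ K₂ free1 free2 α β hαc hβc hαK hβK N hbound (-1)
    ⟨-j, by omega, hwit_j⟩ ⟨i, by omega, hwit_i⟩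
  obtain ⟨sz, hszI, tz, htzI, hEz⟩ := h00
  have hEz' : α sz = β tz := by
    rw [hEz]
    push_cast
    rw [zero_smul, add_zero]
  constructor
  · refine ⟨α sz, hαK _, ?_⟩
    rw [hEz']
    exact hβK _
  · obtain ⟨γ, ⟨hta, htb⟩, hr, h0K, h1K⟩ := IBL.finalArc v hv K₁ K₂ free1 free2 α β
      hαc hβc hαK hβK N hbound hm1 ⟨sz, hszI, tz, htzI, hEz'⟩
    exact ⟨γ, ⟨hta, htb⟩, hr, h0K, h1K⟩

end
end

section
/- Let ĝ : ℝ² → ℝ² be a homeomorphism satisfying ĝ(x + w) = ĝ(x) + w for all x ∈ ℝ² and w ∈ ℤ² (so ĝ is a lift of a homeomorphism of 𝕋² homotopic to the identity). If there exists a bounded set Û ⊆ ℝ² with ĝ(Û) = Û and π(Û) dense in 𝕋², then the rotation set ρ(ĝ) equals {(0,0)}. -/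
noncomputable section

lemma iterate_equivariant (g : Plane ≃ₜ Plane) (hequiv : Equivariant ⇑g)
    (n : ℕ) (x : Plane) (w : IntVec) :
    (⇑g)^[n] (x + ivec w) = (⇑g)^[n] x + ivec w := by
  induction n generalizing x with
  | zero => simp
  | succ m ih =>
    rw [Function.iterate_succ_apply, hequiv, Function.iterate_succ_apply, ih]

lemma iterate_mem (g : Plane ≃ₜ Plane) (U : Set Plane) (hUinv : ⇑g '' U = U)
    (n : ℕ) {u : Plane} (hu : u ∈ U) : (⇑g)^[n] u ∈ U := by
  induction n with
  | zero => simpa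
  | succ m ih =>
    rw [Function.iterate_succ_apply']
    rw [← hUinv]
    exact ⟨_, ih, rfl⟩

theorem rotationSet_trivial_of_bounded_invariant_dense
    (g : Plane ≃ₜ Plane) (hequiv : Equivariant ⇑g)
    (U : Set Plane) (hUb : Bornology.IsBounded U)
    (hUinv : ⇑g '' U = U) (hdense : Dense (proj '' U)) :
    rotationSet ⇑g = {0} := by
  -- Bound the displacement on U
  obtain ⟨r, hr⟩ := hUb.subset_closedBall 0
  -- U is nonempty
  have hne : U.Nonempty := by
    have : (proj '' U).Nonempty := hdense.nonempty
    obtain ⟨_, u, hu, _⟩ := this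
    exact ⟨u, hu⟩
  set C : ℝ := 2 * r with hC
  have hbU : ∀ n : ℕ, ∀ u ∈ U, ‖(⇑g)^[n] u - u‖ ≤ C := by
    intro n u hu
    have h1 : ‖(⇑g)^[n] u‖ ≤ r := by
      have := hr (iterate_mem g U hUinv n hu)
      simpa [Metric.mem_closedBall, dist_eq_norm] using this
    have h2 : ‖u‖ ≤ r := by
      have := hr hu
      simpa [Metric.mem_closedBall, dist_eq_norm] using this
    calc ‖(⇑g)^[n] u - u‖ ≤ ‖(⇑g)^[n] u‖ + ‖u‖ := norm_sub_le _ _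
      _ ≤ 2 * r := by linarith
  -- the saturated set is dense
  have hdS : Dense (proj ⁻¹' (proj '' U)) := by
    have hopen : IsOpenMap proj := QuotientAddGroup.isOpenMap_coe
    have hcont : Continuous proj := continuous_quotient_mk'
    have := hopen.preimage_closure_eq_closure_preimage hcont (proj '' U)
    rw [dense_iff_closure_eq, ← this, hdense.closure_eq, Set.preimage_univ]
  -- displacement bound everywhere
  have hball : ∀ n : ℕ, ∀ x : Plane, ‖(⇑g)^[n] x - x‖ ≤ C := by
    intro n
    have hclosed : IsClosed {x : Plane | ‖(⇑g)^[n] x - x‖ ≤ C} := by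
      apply isClosed_le _ continuous_const
      exact (((g.continuous).iterate n).sub continuous_id).norm
    have hsub : proj ⁻¹' (proj '' U) ⊆ {x : Plane | ‖(⇑g)^[n] x - x‖ ≤ C} := by
      rintro x hx
      obtain ⟨u, hu, hux⟩ := hx
      have : -u + x ∈ Lattice2 := (QuotientAddGroup.eq).1 hux
      obtain ⟨w, hw⟩ := this
      have hxw : x = u + ivec w := by
        have : ivec w = -u + x := hw
        rw [this]; abel
      have : (⇑g)^[n] x - x = (⇑g)^[n] u - u := by
        rw [hxw, iterate_equivariant g hequiv]
        abel
      rw [Set.mem_setOf_eq, this]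
      exact hbU n u hu
    intro x
    have : closure (proj ⁻¹' (proj '' U)) ⊆ {x : Plane | ‖(⇑g)^[n] x - x‖ ≤ C} :=
      closure_minimal hsub hclosed
    exact this (by rw [hdS.closure_eq]; trivial)
  have hCnn : 0 ≤ C := le_trans (norm_nonneg _) (hbU 0 hne.choose hne.choose_spec)
  ext v
  simp only [Set.mem_singleton_iff]
  constructor
  · rintro ⟨x, n, hnpos, hn, htend⟩
    have hbnd : ∀ k, ‖((n k : ℝ))⁻¹ • ((⇑g)^[n k] (x k) - x k)‖ ≤ (n k : ℝ)⁻¹ * C := by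
      intro k
      rw [norm_smul, Real.norm_eq_abs, abs_inv, Nat.abs_cast]
      exact mul_le_mul_of_nonneg_left (hball (n k) (x k)) (by positivity)
    have hz : Filter.Tendsto (fun k => (n k : ℝ)⁻¹ * C) Filter.atTop (nhds 0) := by
      have : Filter.Tendsto (fun k => (n k : ℝ)⁻¹) Filter.atTop (nhds 0) :=
        tendsto_inv_atTop_zero.comp (tendsto_natCast_atTop_atTop.comp hn)
      simpa using this.mul_const C
    have hnv : Filter.Tendsto (fun k => ‖((n k : ℝ))⁻¹ • ((⇑g)^[n k] (x k) - x k)‖)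
        Filter.atTop (nhds ‖v‖) := htend.norm
    have : ‖v‖ ≤ 0 := le_of_tendsto_of_tendsto' hnv hz hbnd
    simpa using le_antisymm this (norm_nonneg v)
  · rintro rfl
    obtain ⟨u, hu⟩ := hne
    refine ⟨fun _ => u, fun k => k + 1, fun k => Nat.succ_pos k,
      Filter.tendsto_add_atTop_nat 1, ?_⟩
    have : Filter.Tendsto (fun k : ℕ => ‖((k + 1 : ℕ) : ℝ)⁻¹ • ((⇑g)^[k + 1] u - u)‖)
        Filter.atTop (nhds 0) := by
      apply squeeze_zero (fun k => norm_nonneg _) (g := fun k : ℕ => ((k + 1 : ℕ) : ℝ)⁻¹ * C)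
      · intro k
        rw [norm_smul, Real.norm_eq_abs, abs_inv, Nat.abs_cast]
        exact mul_le_mul_of_nonneg_left (hbU _ u hu) (by positivity)
      · have : Filter.Tendsto (fun k : ℕ => ((k + 1 : ℕ) : ℝ)⁻¹) Filter.atTop (nhds 0) :=
          tendsto_inv_atTop_zero.comp
            (tendsto_natCast_atTop_atTop.comp (Filter.tendsto_add_atTop_nat 1))
        simpa using this.mul_const C
    exact tendsto_zero_iff_norm_tendsto_zero.2 this


end
end
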